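/- arXiv:1810.13395 — 7 statements merged into one kernel-verified Lean document; each statement's English description precedes it below -/
import Mathlib

section
/- There exist constants C > 0 and κ₀ ≥ 1 such that for every κ ≥ κ₀, every u ∈ (0,1], and every η ∈ (0, η₀(u)], the 4×4 matrix B(u, η/κ) has a complex eigenvalue λ with |λ| ≥ 1 − C/κ. (Thus when the step size satisfies the non-divergence condition η ≤ η₀(u), the second-moment evolution operator of SGD+Nesterov in the low-curvature coordinate has spectral radius at least 1 − O(1/κ).) -/
set_option maxHeartbeats 1000000

open Polynomial Matrix


/-- The 4×4 matrix governing the evolution of the second moments of one coordinate of the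
error of SGD+Nesterov with per-coordinate step size `t` and momentum `γ = 1 - u` on the
component decoupled data model. -/
noncomputable def nesterovMomentMatrix (u t : ℝ) : Matrix (Fin 4) (Fin 4) ℝ :=
  let γ : ℝ := 1 - u
  let A : ℝ := (1 - t) ^ 2 + 5 * t ^ 2
  !![(1 + γ) ^ 2 * A, -(γ * (1 + γ) * A), -(γ * (1 + γ) * A), γ ^ 2 * A;
     (1 + γ) * (1 - t), 0, -(γ * (1 - t)), 0;
     (1 + γ) * (1 - t), -(γ * (1 - t)), 0, 0;
     1, 0, 0, 0]

/-- The critical step size `η₀(u)`. -/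
noncomputable def eta0 (u : ℝ) : ℝ :=
  (-3 - 2 * u + 2 * u ^ 2 +
      Real.sqrt (9 + 84 * u - 164 * u ^ 2 + 100 * u ^ 3 - 20 * u ^ 4)) /
    (2 * (9 - 15 * u + 6 * u ^ 2))

theorem my_det_fin_four {R : Type*} [CommRing R] (M : Matrix (Fin 4) (Fin 4) R) :
    M.det =
      M 0 0 * (M 1 1 * (M 2 2 * M 3 3 - M 2 3 * M 3 2) - M 1 2 * (M 2 1 * M 3 3 - M 2 3 * M 3 1) +
          M 1 3 * (M 2 1 * M 3 2 - M 2 2 * M 3 1)) -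
        M 0 1 * (M 1 0 * (M 2 2 * M 3 3 - M 2 3 * M 3 2) - M 1 2 * (M 2 0 * M 3 3 - M 2 3 * M 3 0) +
          M 1 3 * (M 2 0 * M 3 2 - M 2 2 * M 3 0)) +
        M 0 2 * (M 1 0 * (M 2 1 * M 3 3 - M 2 3 * M 3 1) - M 1 1 * (M 2 0 * M 3 3 - M 2 3 * M 3 0) +
          M 1 3 * (M 2 0 * M 3 1 - M 2 1 * M 3 0)) -
        M 0 3 * (M 1 0 * (M 2 1 * M 3 2 - M 2 2 * M 3 1) - M 1 1 * (M 2 0 * M 3 2 - M 2 2 * M 3 0) +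
          M 1 2 * (M 2 0 * M 3 1 - M 2 1 * M 3 0)) := by
  rw [Matrix.det_succ_row_zero]
  simp [Fin.sum_univ_succ, Matrix.det_fin_three, Matrix.submatrix_apply, Fin.succAbove]
  norm_num [show (Fin.succ 2 : Fin 4) = 3 from rfl, show (Fin.castSucc 2 : Fin 4) = 2 from rfl]
  ring

noncomputable def nesQ (u t r : ℝ) : ℝ :=
  r^3 - ((1 + (1-u) + (1-u)^2) - (2 + 3*(1-u) + 2*(1-u)^2)*t + 6*(1 + 2*(1-u) + (1-u)^2)*t^2)*r^2
    + (((1-u) + (1-u)^3)*(1 - 3*t + 8*t^2 - 6*t^3) + (1-u)^2*(1 - 4*t + 10*t^2 - 12*t^3))*r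
    - (1-u)^3*(1 - 3*t + 8*t^2 - 6*t^3)

lemma nes_matrix_eq (u t r : ℝ) :
    Matrix.scalar (Fin 4) r - nesterovMomentMatrix u t =
    !![r - (1 + (1-u)) ^ 2 * ((1 - t) ^ 2 + 5 * t ^ 2), (1-u) * (1 + (1-u)) * ((1 - t) ^ 2 + 5 * t ^ 2), (1-u) * (1 + (1-u)) * ((1 - t) ^ 2 + 5 * t ^ 2), -((1-u) ^ 2 * ((1 - t) ^ 2 + 5 * t ^ 2));
       -((1 + (1-u)) * (1 - t)), r, (1-u) * (1 - t), 0;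
       -((1 + (1-u)) * (1 - t)), (1-u) * (1 - t), r, 0;
       -1, 0, 0, r] := by
  ext i j
  fin_cases i <;> fin_cases j <;>
    simp [nesterovMomentMatrix, Matrix.scalar_apply, Matrix.sub_apply, Matrix.diagonal_apply, Matrix.vecHead, Matrix.vecTail]

lemma nes_charpoly_eval (u t r : ℝ) :
    (nesterovMomentMatrix u t).charpoly.eval r = (r - (1-u)*(1-t)) * nesQ u t r := by
  have h : (nesterovMomentMatrix u t).charpoly.eval r
      = (Matrix.scalar (Fin 4) r - nesterovMomentMatrix u t).det := by
    rw [Matrix.charpoly, eval_det, matPolyEquiv_charmatrix]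
    simp
  rw [h, nes_matrix_eq, my_det_fin_four]
  simp only [Matrix.cons_val', Matrix.cons_val_zero, Matrix.cons_val_one, Matrix.head_cons,
    Matrix.empty_val', Matrix.cons_val_fin_one, Matrix.head_fin_const,
    Matrix.cons_val_two, Matrix.cons_val_three, Matrix.tail_cons, Matrix.of_apply]
  unfold nesQ
  ring

lemma eta0_le_self {u : ℝ} (hu0 : 0 < u) (hu1 : u ≤ 1) : eta0 u ≤ u := by
  rcases eq_or_lt_of_le hu1 with h1 | h1
  · subst h1
    have h9 : Real.sqrt (9 + 84 * 1 - 164 * 1 ^ 2 + 100 * 1 ^ 3 - 20 * 1 ^ 4) = 3 := by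
      rw [show (9 + 84 * 1 - 164 * 1 ^ 2 + 100 * 1 ^ 3 - 20 * (1:ℝ) ^ 4) = 3 ^ 2 by norm_num,
        Real.sqrt_sq (by norm_num)]
    simp [eta0, h9]
    norm_num
  · have hden : 0 < 2 * (9 - 15 * u + 6 * u ^ 2) := by nlinarith
    rw [eta0, div_le_iff₀ hden]
    have hRHS : (0:ℝ) ≤ 3 + 20 * u - 32 * u ^ 2 + 12 * u ^ 3 := by nlinarith
    have hsq : Real.sqrt (9 + 84 * u - 164 * u ^ 2 + 100 * u ^ 3 - 20 * u ^ 4)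
        ≤ 3 + 20 * u - 32 * u ^ 2 + 12 * u ^ 3 := by
      rw [show (3 + 20 * u - 32 * u ^ 2 + 12 * u ^ 3)
          = Real.sqrt ((3 + 20 * u - 32 * u ^ 2 + 12 * u ^ 3) ^ 2) by
        rw [Real.sqrt_sq hRHS]]
      apply Real.sqrt_le_sqrt
      nlinarith [sq_nonneg (1-u), sq_nonneg u, mul_pos hu0 (sub_pos.2 h1),
        mul_nonneg (mul_nonneg hu0.le hu0.le) (sub_pos.2 h1).le,
        mul_nonneg (mul_nonneg (mul_nonneg hu0.le hu0.le) hu0.le) (sub_pos.2 h1).le]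
    nlinarith

lemma F_nonneg {u s t : ℝ} (hu1 : u ≤ 1) (hs0 : 0 < s) (hsu : 2*s ≤ u) (hs4 : s ≤ 1/4)
    (ht0 : 0 ≤ t) (ht : 100*t ≤ u*s) :
    0 ≤ s*(u-s)*(2*u-u^2-s)
      + t*(4*s - 7*s^2 - 4*u + 6*u*s + 7*u*s^2 + 2*u^2 - 9*u^2*s - 2*u^2*s^2 + 3*u^3*s)
      + t^2*(6 - 22*s + 24*s^2 + 4*u - 4*u*s - 24*u*s^2 - 4*u^2 + 22*u^2*s + 6*u^2*s^2 - 8*u^3*s)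
      + t^3*(18 - 24*s - 30*u + 48*u*s + 12*u^2 - 30*u^2*s + 6*u^3*s) := by
  have hu0 : 0 < u := by linarith
  have hG : -(6*u) ≤ 4*s - 7*s^2 - 4*u + 6*u*s + 7*u*s^2 + 2*u^2 - 9*u^2*s - 2*u^2*s^2 + 3*u^3*s := by
    nlinarith [mul_nonneg hs0.le (by linarith : (0:ℝ) ≤ 4 - 7*s),
      mul_nonneg (mul_nonneg hu0.le hs0.le) (by nlinarith : (0:ℝ) ≤ 7*s),
      mul_nonneg (mul_nonneg hu0.le hu0.le)
        (by nlinarith [mul_nonneg (by linarith : (0:ℝ) ≤ 1-4*s) (by linarith : (0:ℝ) ≤ 2-s),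
          mul_nonneg (by linarith : (0:ℝ) ≤ u-2*s) hs0.le] : (0:ℝ) ≤ 2 - 9*s + 3*u*s),
      mul_nonneg (mul_nonneg (mul_nonneg hu0.le hu0.le) hs0.le) hs0.le]
  have hH : -(76:ℝ) ≤ 6 - 22*s + 24*s^2 + 4*u - 4*u*s - 24*u*s^2 - 4*u^2 + 22*u^2*s + 6*u^2*s^2 - 8*u^3*s := by
    nlinarith [sq_nonneg s, sq_nonneg u, mul_nonneg hu0.le hs0.le, sq_nonneg (u*s),
      mul_nonneg (mul_nonneg hu0.le hu0.le) hs0.le,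
      mul_nonneg (mul_nonneg (mul_nonneg hu0.le hu0.le) hu0.le) hs0.le,
      mul_nonneg (mul_nonneg hu0.le hs0.le) hs0.le]
  have hK : -(44:ℝ) ≤ 18 - 24*s - 30*u + 48*u*s + 12*u^2 - 30*u^2*s + 6*u^3*s := by
    nlinarith [mul_nonneg hu0.le hs0.le, sq_nonneg u,
      mul_nonneg (mul_nonneg hu0.le hu0.le) hs0.le,
      mul_nonneg (mul_nonneg (mul_nonneg hu0.le hu0.le) hu0.le) hs0.le]
  have hmain : s*(u^2/4) ≤ s*(u-s)*(2*u-u^2-s) := by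
    have h1 : u/2 ≤ u - s := by linarith
    have h2 : u/2 ≤ 2*u - u^2 - s := by nlinarith
    have h3 : (u/2)*(u/2) ≤ (u-s)*(2*u-u^2-s) := by
      apply mul_le_mul h1 h2 (by linarith) (by linarith)
    have h4 := mul_le_mul_of_nonneg_left h3 hs0.le
    nlinarith [h4]
  have htus : t ≤ u*s/100 := by linarith
  have ht2 : t^2 ≤ (u*s/100)^2 := pow_le_pow_left₀ ht0 htus 2
  have ht3 : t^3 ≤ (u*s/100)^3 := pow_le_pow_left₀ ht0 htus 3
  have hGmul := mul_le_mul_of_nonneg_left hG ht0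
  have hHmul := mul_le_mul_of_nonneg_left hH (mul_nonneg ht0 ht0)
  have hKmul := mul_le_mul_of_nonneg_left hK (mul_nonneg (mul_nonneg ht0 ht0) ht0)
  have h6ut : 6*(t*u) ≤ 6*((u*s/100)*u) := by
    have := mul_le_mul_of_nonneg_right htus hu0.le
    linarith
  have hus1 : u*s ≤ 1/4 := by nlinarith
  nlinarith [hGmul, hHmul, hKmul, hmain, h6ut, ht2, ht3, hus1,
    mul_pos hs0 (mul_pos hu0 hu0), mul_nonneg (mul_nonneg hu0.le hs0.le) (mul_nonneg hu0.le hs0.le),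
    mul_nonneg (mul_nonneg (mul_nonneg hu0.le hs0.le) (mul_nonneg hu0.le hs0.le)) (mul_nonneg hu0.le hs0.le)]

lemma nes_eval100_pos {u t : ℝ} (hu0 : 0 ≤ u) (hu1 : u ≤ 1) (ht0 : 0 ≤ t) (ht1 : t ≤ 1) :
    0 < (nesterovMomentMatrix u t).charpoly.eval 100 := by
  rw [nes_charpoly_eval]
  have hg0 : (0:ℝ) ≤ 1 - u := by linarith
  have hg1 : 1 - u ≤ 1 := by linarith
  have hq : 0 < nesQ u t 100 := by
    have c2 : (1 + (1-u) + (1-u)^2) - (2 + 3*(1-u) + 2*(1-u)^2)*t + 6*(1 + 2*(1-u) + (1-u)^2)*t^2 ≤ 27 := by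
      nlinarith [mul_nonneg (by nlinarith : (0:ℝ) ≤ 2 + 3*(1-u) + 2*(1-u)^2) ht0,
        sq_nonneg (1-u), mul_nonneg ht0 ht0, sq_nonneg t,
        mul_nonneg (mul_nonneg ht0 ht0) (by linarith : (0:ℝ) ≤ 1 - t),
        mul_nonneg hg0 (mul_nonneg ht0 ht0), mul_nonneg (mul_nonneg hg0 hg0) (mul_nonneg ht0 ht0)]
    have hfac1 : (0:ℝ) ≤ 1 - 3*t + 8*t^2 - 6*t^3 := by
      have : (1:ℝ) - 3*t + 8*t^2 - 6*t^3 = (1-t)*(1-2*t+6*t^2) := by ring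
      rw [this]
      apply mul_nonneg (by linarith)
      nlinarith [sq_nonneg (1 - 3*t)]
    have hfac1' : 1 - 3*t + 8*t^2 - 6*t^3 ≤ 5 := by nlinarith [mul_nonneg ht0 (mul_nonneg ht0 ht0), sq_nonneg t, mul_nonneg ht0 (sq_nonneg (1-t))]
    have hfac2 : -5 ≤ 1 - 4*t + 10*t^2 - 12*t^3 := by
      have : (1:ℝ) - 4*t + 10*t^2 - 12*t^3 = (1-2*t)*(1-2*t+6*t^2) := by ring
      rw [this]
      nlinarith [sq_nonneg (1-3*t), sq_nonneg t, mul_nonneg ht0 (sq_nonneg (1-2*t))]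
    have c1 : -5 ≤ ((1-u) + (1-u)^3)*(1 - 3*t + 8*t^2 - 6*t^3) + (1-u)^2*(1 - 4*t + 10*t^2 - 12*t^3) := by
      nlinarith [mul_nonneg (by nlinarith : (0:ℝ) ≤ (1-u) + (1-u)^3) hfac1,
        sq_nonneg (1-u), mul_nonneg (mul_nonneg hg0 hg0) (by linarith : (0:ℝ) ≤ 1 - 4*t + 10*t^2 - 12*t^3 + 5)]
    have c0 : (1-u)^3*(1 - 3*t + 8*t^2 - 6*t^3) ≤ 5 := by
      nlinarith [mul_nonneg (mul_nonneg (mul_nonneg hg0 hg0) hg0) hfac1, sq_nonneg (1-u),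
        mul_nonneg (mul_nonneg hg0 hg0) hg0]
    unfold nesQ
    nlinarith [c2, c1, c0]
  have hd : (0:ℝ) < 100 - (1-u)*(1-t) := by nlinarith
  exact mul_pos hd hq

lemma abs_multiset_prod_le {r : ℝ} (hr : 0 ≤ r) (S : Multiset ℂ)
    (h : ∀ z ∈ S, ‖z‖ ≤ r) :
    ‖S.prod‖ ≤ r ^ (Multiset.card S) := by
  induction S using Multiset.induction with
  | empty => simp
  | cons a s ih =>
    have ha := h a (Multiset.mem_cons_self a s)
    have hs := ih (fun z hz => h z (Multiset.mem_cons_of_mem hz))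
    rw [Multiset.prod_cons, norm_mul, Multiset.card_cons, pow_succ']
    exact mul_le_mul ha hs (norm_nonneg _) hr

/-- There exist `C > 0` and `κ₀ ≥ 1` such that for every `κ ≥ κ₀`, every `u ∈ (0,1]` and
every `η ∈ (0, η₀(u)]`, the matrix `B(u, η/κ)` has a complex eigenvalue `λ` (a root of its
characteristic polynomial over `ℂ`) with `|λ| ≥ 1 - C/κ`. -/
theorem nesterovMomentMatrix_spectral_radius_lower_bound :
    ∃ C > (0 : ℝ), ∃ κ₀ ≥ (1 : ℝ), ∀ κ ≥ κ₀, ∀ u ∈ Set.Ioc (0 : ℝ) 1,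
      ∀ η ∈ Set.Ioc (0 : ℝ) (eta0 u),
      ∃ lam : ℂ,
        ((nesterovMomentMatrix u (η / κ)).charpoly.map (algebraMap ℝ ℂ)).IsRoot lam ∧
        1 - C / κ ≤ ‖lam‖ := by
  refine ⟨600, by norm_num, 400, by norm_num, ?_⟩
  intro κ hκ u hu η hη
  obtain ⟨hu0, hu1⟩ := hu
  obtain ⟨hη0, hη1⟩ := hη
  have hκ0 : (0:ℝ) < κ := by linarith
  set t : ℝ := η / κ with ht_def
  have ht0 : 0 < t := div_pos hη0 hκ0
  have hηu : η ≤ u := le_trans hη1 (eta0_le_self hu0 hu1)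
  have htu : t ≤ u / κ := by
    rw [ht_def]
    exact div_le_div_of_nonneg_right hηu hκ0.le
  have htsmall : t ≤ 1/400 := by
    have h1 : u / κ ≤ 1 / 400 := by
      rw [div_le_div_iff₀ hκ0 (by norm_num)]
      nlinarith
    linarith
  set p : Polynomial ℝ := (nesterovMomentMatrix u t).charpoly with hp_def
  set pc : Polynomial ℂ := p.map (algebraMap ℝ ℂ) with hpc_def
  have hmonic : p.Monic := Matrix.charpoly_monic _
  have hpc_monic : pc.Monic := hmonic.map _
  have hpc_ne : pc ≠ 0 := hpc_monic.ne_zero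
  have hdeg : pc.natDegree = 4 := by
    rw [hpc_def, hmonic.natDegree_map, hp_def, Matrix.charpoly_natDegree_eq_dim]
    simp
  by_cases hr0 : 1 - 600 / κ ≤ 0
  · -- trivial: any root works
    have hdegpos : 0 < pc.degree := by
      rw [Polynomial.degree_eq_natDegree hpc_ne, hdeg]
      norm_num
    obtain ⟨z, hz⟩ := Complex.exists_root hdegpos
    exact ⟨z, hz, le_trans hr0 (norm_nonneg z)⟩
  · push_neg at hr0
    have hκ600 : 600 < κ := by
      by_contra hcon
      push_neg at hcon
      have : 1 ≤ 600 / κ := (le_div_iff₀ hκ0).mpr (by linarith)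
      linarith
    by_cases hcase : u ≤ 200 / κ
    · -- Case A : determinant bound
      have hu12 : u ≤ 1/2 := le_trans hcase (by rw [div_le_iff₀ hκ0]; nlinarith)
      have ht2 : 2*t ≤ 1/κ := by
        have : t ≤ (200/κ)/κ := le_trans htu (div_le_div_of_nonneg_right hcase hκ0.le)
        rw [div_div] at this
        have h2 : (400:ℝ)/(κ*κ) ≤ 1/κ := by
          rw [div_le_div_iff₀ (by positivity) hκ0]
          nlinarith
        calc 2*t ≤ 2*(200/(κ*κ)) := by linarith
          _ = 400/(κ*κ) := by ring
          _ ≤ 1/κ := h2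
      have hgap : 1 - 600/κ < 1 - u - 2*t := by
        have h1 : u + 2*t ≤ 201/κ := by
          have he : (200:ℝ)/κ + 1/κ = 201/κ := by ring
          linarith
        have h2 : (201:ℝ)/κ < 600/κ := (div_lt_div_iff_of_pos_right hκ0).mpr (by norm_num)
        linarith
      have hpos : 0 < 1 - u - 2*t := lt_trans hr0 hgap
      have hdet_ge : (1 - u - 2*t)^4 ≤ p.eval 0 := by
        rw [hp_def, nes_charpoly_eval]
        have hid : (0 - (1-u)*(1-t)) * nesQ u t 0
            = (1-u)^4 * (1 - 4*t + 11*t^2 - 14*t^3 + 6*t^4) := by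
          unfold nesQ; ring
        rw [hid]
        have h1 : (1-2*t)^4 ≤ 1 - 4*t + 11*t^2 - 14*t^3 + 6*t^4 := by
          nlinarith [ht0.le, htsmall, sq_nonneg t,
            mul_nonneg ht0.le (mul_nonneg ht0.le ht0.le), mul_nonneg ht0.le ht0.le]
        have hub : 1 - u - 2*t ≤ (1-u)*(1-2*t) := by nlinarith [mul_nonneg hu0.le ht0.le]
        have h2 : (1 - u - 2*t)^4 ≤ ((1-u)*(1-2*t))^4 := pow_le_pow_left₀ hpos.le hub 4
        calc (1-u-2*t)^4 ≤ ((1-u)*(1-2*t))^4 := h2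
          _ = (1-u)^4 * ((1-2*t)^4) := by ring
          _ ≤ (1-u)^4 * (1 - 4*t + 11*t^2 - 14*t^3 + 6*t^4) :=
              mul_le_mul_of_nonneg_left h1 (by positivity)
      have hsplit : pc.Splits := IsAlgClosed.splits pc
      have hcard : Multiset.card pc.roots = 4 := by
        rw [← hdeg]
        exact Polynomial.splits_iff_card_roots.mp hsplit
      have hprod : pc.coeff 0 = (-1)^pc.natDegree * pc.roots.prod :=
        hsplit.coeff_zero_eq_prod_roots_of_monic hpc_monic
      by_contra hcon
      push_neg at hcon
      have hbound : ∀ z ∈ pc.roots, ‖z‖ ≤ 1 - 600/κ := by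
        intro z hz
        exact (hcon z (Polynomial.mem_roots'.mp hz).2).le
      have habs := abs_multiset_prod_le hr0.le pc.roots hbound
      rw [hcard] at habs
      have hc0 : pc.coeff 0 = ((p.eval 0 : ℝ) : ℂ) := by
        rw [hpc_def, Polynomial.coeff_map, Polynomial.coeff_zero_eq_eval_zero]
        simp [Complex.coe_algebraMap]
      have habs0 : ‖pc.coeff 0‖ = |p.eval 0| := by
        rw [hc0, Complex.norm_real, Real.norm_eq_abs]
      have hprodabs : ‖pc.roots.prod‖ = |p.eval 0| := by
        rw [← habs0, hprod, hdeg]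
        simp
      have hchain : (1-u-2*t)^4 ≤ (1-600/κ)^4 := by
        calc (1-u-2*t)^4 ≤ p.eval 0 := hdet_ge
          _ ≤ |p.eval 0| := le_abs_self _
          _ = ‖pc.roots.prod‖ := hprodabs.symm
          _ ≤ (1-600/κ)^4 := habs
      have hlt : (1-600/κ)^4 < (1-u-2*t)^4 := by
        apply pow_lt_pow_left₀ hgap hr0.le
        norm_num
      linarith
    · push_neg at hcase
      set sv : ℝ := 100/κ with hs_def
      have hs0 : 0 < sv := by positivity
      have hsu : 2*sv ≤ u := by
        have he : (2:ℝ)*(100/κ) = 200/κ := by ring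
        rw [hs_def, he]
        exact hcase.le
      have hs4 : sv ≤ 1/4 := by
        rw [hs_def, div_le_iff₀ hκ0]
        linarith
      have ht100 : 100*t ≤ u*sv := by
        have h := div_le_div_of_nonneg_right hηu hκ0.le
        calc 100*t = 100*(η/κ) := by rw [ht_def]
          _ ≤ 100*(u/κ) := by linarith
          _ = u*(100/κ) := by ring
          _ = u*sv := by rw [hs_def]
      have hF := F_nonneg hu1 hs0 hsu hs4 ht0.le ht100
      have heval1 : p.eval (1-sv) ≤ 0 := by
        rw [hp_def, nes_charpoly_eval]
        have hQ : nesQ u t (1-sv) = -(sv*(u-sv)*(2*u-u^2-sv)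
            + t*(4*sv - 7*sv^2 - 4*u + 6*u*sv + 7*u*sv^2 + 2*u^2 - 9*u^2*sv - 2*u^2*sv^2 + 3*u^3*sv)
            + t^2*(6 - 22*sv + 24*sv^2 + 4*u - 4*u*sv - 24*u*sv^2 - 4*u^2 + 22*u^2*sv + 6*u^2*sv^2 - 8*u^3*sv)
            + t^3*(18 - 24*sv - 30*u + 48*u*sv + 12*u^2 - 30*u^2*sv + 6*u^3*sv)) := by
          unfold nesQ; ring
        rw [hQ]
        have hD : 0 ≤ (1-sv) - (1-u)*(1-t) := by
          nlinarith [mul_nonneg ht0.le (by linarith : (0:ℝ) ≤ 1-u)]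
        nlinarith [mul_nonneg hD hF]
      have heval2 : 0 < p.eval 100 := nes_eval100_pos hu0.le hu1 ht0.le (by linarith)
      have hle : (1-sv : ℝ) ≤ 100 := by nlinarith
      have hcont : ContinuousOn (fun x => p.eval x) (Set.Icc (1-sv) 100) :=
        (Polynomial.continuous p).continuousOn
      have hmem : (0:ℝ) ∈ Set.Icc (p.eval (1-sv)) (p.eval 100) := ⟨heval1, heval2.le⟩
      obtain ⟨x, hx_mem, hx_eval⟩ := intermediate_value_Icc hle hcont hmem
      refine ⟨(x:ℂ), ?_, ?_⟩
      · have hroot : p.IsRoot x := hx_eval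
        have := hroot.map (f := algebraMap ℝ ℂ)
        simpa [hpc_def, Complex.coe_algebraMap] using this
      · rw [Complex.norm_real, Real.norm_eq_abs]
        have hx1 : 1 - sv ≤ x := hx_mem.1
        have h56 : (100:ℝ)/κ ≤ 600/κ := (div_le_div_iff_of_pos_right hκ0).mpr (by norm_num)
        have hrs : 1 - 600/κ ≤ 1 - sv := by rw [hs_def]; linarith
        calc 1 - 600/κ ≤ x := by linarith
          _ ≤ |x| := le_abs_self x
end

section
/- Let H be a d×d symmetric positive definite matrix with smallest eigenvalue μ > 0, let H̃ be a random d×d symmetric positive semidefinite matrix with E[H̃] = H, E[H̃ H⁻¹ H̃] ⪯ κ̃ H and E[H̃²] ⪯ L H, and let w* ∈ ℝ^d. Let η, α, δ > 0 with α ≤ 1, let v, w ∈ ℝ^d be arbitrary, set u = (αv + w)/(1+α), and define the random vectors w⁺ = u − η H̃ (u − w*) and v⁺ = (1−α)v + αu − δ H̃ (u − w*). Then E[‖v⁺ − w*‖²_{H⁻¹} + (δ/α)‖w⁺ − w*‖²] ≤ (1−α)(‖v − w*‖²_{H⁻¹} + (δ/α)‖w − w*‖²) + (α/μ − δ)‖u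 − w*‖² + (δ²κ̃ + δη²L/α − 2ηδ/α)‖u − w*‖²_H. -/
open MeasureTheory ProbabilityTheory Matrix

/-- The quadratic form `zᵀ M z` of a matrix `M`. -/
noncomputable def qf {d : ℕ} (M : Matrix (Fin d) (Fin d) ℝ) (z : Fin d → ℝ) : ℝ :=
  z ⬝ᵥ M.mulVec z

/-- Entrywise expectation of a random matrix. -/
noncomputable def Emat {Ω : Type} [MeasurableSpace Ω] (P : Measure Ω) {d : ℕ}
    (M : Ω → Matrix (Fin d) (Fin d) ℝ) : Matrix (Fin d) (Fin d) ℝ :=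
  Matrix.of fun i j => ∫ ω, M ω i j ∂P

lemma dp_symm {d : ℕ} (N : Matrix (Fin d) (Fin d) ℝ) (hN : Nᵀ = N) (a b : Fin d → ℝ) :
    a ⬝ᵥ N.mulVec b = N.mulVec a ⬝ᵥ b := by
  rw [Matrix.dotProduct_mulVec, ← Matrix.mulVec_transpose, hN]

lemma dp_symm' {d : ℕ} (N : Matrix (Fin d) (Fin d) ℝ) (hN : Nᵀ = N) (a b : Fin d → ℝ) :
    a ⬝ᵥ N.mulVec b = b ⬝ᵥ N.mulVec a := by
  rw [dp_symm N hN a b, dotProduct_comm]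

lemma qf_expand {d : ℕ} (N : Matrix (Fin d) (Fin d) ℝ) (hN : Nᵀ = N) (p q : Fin d → ℝ) (c : ℝ) :
    qf N (p - c • q) = qf N p - 2*c*(p ⬝ᵥ N.mulVec q) + c^2 * qf N q := by
  have h : q ⬝ᵥ N.mulVec p = p ⬝ᵥ N.mulVec q := dp_symm' N hN q p
  simp only [qf, Matrix.mulVec_sub, Matrix.mulVec_smul, dotProduct_sub, sub_dotProduct,
    dotProduct_smul, smul_dotProduct, smul_eq_mul, h]
  ring

set_option maxHeartbeats 2000000 in
lemma Hinv_qf_le {d : ℕ} (H : Matrix (Fin d) (Fin d) ℝ) (hH : H.PosDef)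
    (μ : ℝ) (hμ : 0 < μ)
    (hle : ∀ c : ℝ, (∃ v : Fin d → ℝ, v ≠ 0 ∧ H.mulVec v = c • v) → μ ≤ c)
    (z : Fin d → ℝ) : μ * qf H⁻¹ z ≤ z ⬝ᵥ z := by
  have hHerm : H.IsHermitian := hH.1
  -- H - μ•1 is psd
  have hsym : (H - μ • 1).IsHermitian := by
    have h1 : (μ • (1 : Matrix (Fin d) (Fin d) ℝ)).IsHermitian := by
      unfold Matrix.IsHermitian
      rw [Matrix.conjTranspose_smul]
      simp [Matrix.isHermitian_one.eq]
    exact hHerm.sub h1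
  have hP : (H - μ • (1 : Matrix (Fin d) (Fin d) ℝ)).PosSemidef := by
    apply (Matrix.IsHermitian.posSemidef_iff_eigenvalues_nonneg hsym).mpr
    intro i
    set b : Fin d → ℝ := ⇑(hsym.eigenvectorBasis i) with hb
    have hv : (H - μ • 1).mulVec b = hsym.eigenvalues i • b :=
      hsym.mulVec_eigenvectorBasis i
    have hb0 : b ≠ 0 := by
      intro hcontra
      have hnorm := hsym.eigenvectorBasis.orthonormal.1 i
      rw [show (hsym.eigenvectorBasis i) = 0 from by
        ext j; exact congrFun hcontra j] at hnorm
      simp at hnorm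
    have hHb : H.mulVec b = (hsym.eigenvalues i + μ) • b := by
      have h1 : H.mulVec b - μ • b = hsym.eigenvalues i • b := by
        simpa [Matrix.sub_mulVec, Matrix.smul_mulVec, Matrix.one_mulVec] using hv
      have := congrArg (· + μ • b) h1
      simpa [sub_add_cancel, add_smul, add_comm] using this
    have := hle _ ⟨b, hb0, hHb⟩
    show (0:ℝ) ≤ _; linarith
  -- conjugate with sqrt to get H*H - μ•H psd
  obtain ⟨S, hSS, hSH⟩ : ∃ S : Matrix (Fin d) (Fin d) ℝ, S * S = H ∧ Sᴴ = S :=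
    open scoped MatrixOrder in
    ⟨CFC.sqrt H, CFC.sqrt_mul_sqrt_self H hH.posSemidef.nonneg, (CFC.sqrt_nonneg H).posSemidef.1⟩
  have hconj : (H * H - μ • H).PosSemidef := by
    have h2 : Sᴴ * (H - μ • 1) * S = H * H - μ • H := by
      rw [hSH, Matrix.mul_sub, Matrix.sub_mul, mul_smul_comm, smul_mul_assoc, Matrix.mul_one,
        ← hSS]
      congr 1
      simp only [Matrix.mul_assoc]
    exact h2 ▸ hP.conjTranspose_mul_mul_same S
  -- main computation
  set y := H⁻¹.mulVec z with hy
  have hz : H.mulVec y = z := by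
    rw [hy, Matrix.mulVec_mulVec, Matrix.mul_nonsing_inv _ hH.det_pos.ne'.isUnit, Matrix.one_mulVec]
  have hTr : Hᵀ = H := by
    have := hHerm.eq
    simpa [Matrix.conjTranspose_eq_transpose_of_trivial] using this
  have hq : qf H⁻¹ z = y ⬝ᵥ H.mulVec y := by
    calc qf H⁻¹ z = z ⬝ᵥ y := by rw [qf, hy]
    _ = (H.mulVec y) ⬝ᵥ y := by rw [hz]
    _ = y ⬝ᵥ H.mulVec y := dotProduct_comm _ _
  have hzz : z ⬝ᵥ z = y ⬝ᵥ (H * H).mulVec y := by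
    calc z ⬝ᵥ z = (H.mulVec y) ⬝ᵥ (H.mulVec y) := by rw [hz]
    _ = y ⬝ᵥ H.mulVec (H.mulVec y) := (dp_symm H hTr y (H.mulVec y)).symm
    _ = y ⬝ᵥ (H * H).mulVec y := by rw [Matrix.mulVec_mulVec]
  have h0 := hconj.dotProduct_mulVec_nonneg y
  simp only [star_trivial, Matrix.sub_mulVec, Matrix.smul_mulVec, dotProduct_sub,
    dotProduct_smul, smul_eq_mul] at h0
  rw [hq, hzz]
  linarith

lemma dp_sum {d : ℕ} (M : Matrix (Fin d) (Fin d) ℝ) (a b : Fin d → ℝ) :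
    a ⬝ᵥ M.mulVec b = ∑ i, ∑ j, a i * M i j * b j := by
  simp [dotProduct, Matrix.mulVec, Finset.mul_sum, mul_assoc, mul_comm, mul_left_comm]

lemma integrable_dpform {d : ℕ} {Ω : Type} [MeasurableSpace Ω] (P : Measure Ω)
    (F : Ω → Matrix (Fin d) (Fin d) ℝ)
    (hF : ∀ i j, Integrable (fun ω => F ω i j) P) (a b : Fin d → ℝ) :
    Integrable (fun ω => a ⬝ᵥ (F ω).mulVec b) P := by
  have h : (fun ω => a ⬝ᵥ (F ω).mulVec b) = fun ω => ∑ i, ∑ j, a i * F ω i j * b j := by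
    funext ω; exact dp_sum _ a b
  rw [h]
  refine integrable_finset_sum _ fun i _ => integrable_finset_sum _ fun j _ => ?_
  simpa [mul_assoc] using ((hF i j).const_mul (a i)).mul_const (b j)

lemma integral_dpform {d : ℕ} {Ω : Type} [MeasurableSpace Ω] (P : Measure Ω)
    (F : Ω → Matrix (Fin d) (Fin d) ℝ)
    (hF : ∀ i j, Integrable (fun ω => F ω i j) P) (a b : Fin d → ℝ) :
    ∫ ω, a ⬝ᵥ (F ω).mulVec b ∂P = a ⬝ᵥ (Emat P F).mulVec b := by
  have h : (fun ω => a ⬝ᵥ (F ω).mulVec b) = fun ω => ∑ i, ∑ j, a i * F ω i j * b j := by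
    funext ω; exact dp_sum _ a b
  rw [h, dp_sum]
  rw [integral_finset_sum _ fun i _ => integrable_finset_sum _ fun j _ => by
    simpa [mul_assoc] using ((hF i j).const_mul (a i)).mul_const (b j)]
  refine Finset.sum_congr rfl fun i _ => ?_
  rw [integral_finset_sum _ fun j _ => by
    simpa [mul_assoc] using ((hF i j).const_mul (a i)).mul_const (b j)]
  refine Finset.sum_congr rfl fun j _ => ?_
  rw [show (fun ω => a i * F ω i j * b j) = fun ω => (a i) * (F ω i j * b j) by
    funext ω; ring]
  rw [integral_const_mul]
  rw [show (fun ω => F ω i j * b j) = fun ω => (F ω i j) * b j from rfl, integral_mul_const]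
  simp [Emat]
  ring

lemma herm_tr {d : ℕ} {N : Matrix (Fin d) (Fin d) ℝ} (h : N.IsHermitian) : Nᵀ = N := by
  have := h.eq
  simpa [Matrix.conjTranspose_eq_transpose_of_trivial] using this

lemma integral_decomp {Ω : Type} [MeasurableSpace Ω] (P : Measure Ω) [IsProbabilityMeasure P]
    (c0 c1 c2 c3 c4 : ℝ) (g1 g2 g3 g4 : Ω → ℝ)
    (i1 : Integrable g1 P) (i2 : Integrable g2 P) (i3 : Integrable g3 P) (i4 : Integrable g4 P) :
    ∫ ω, (c0 + (c1 * g1 ω + (c2 * g2 ω + (c3 * g3 ω + c4 * g4 ω)))) ∂P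
      = c0 + (c1 * ∫ ω, g1 ω ∂P + (c2 * ∫ ω, g2 ω ∂P
          + (c3 * ∫ ω, g3 ω ∂P + c4 * ∫ ω, g4 ω ∂P))) := by
  have h4' : Integrable (fun ω => c3 * g3 ω + c4 * g4 ω) P :=
    (i3.const_mul c3).add (i4.const_mul c4)
  have h3' : Integrable (fun ω => c2 * g2 ω + (c3 * g3 ω + c4 * g4 ω)) P :=
    (i2.const_mul c2).add h4'
  have h2' : Integrable (fun ω => c1 * g1 ω + (c2 * g2 ω + (c3 * g3 ω + c4 * g4 ω))) P :=
    (i1.const_mul c1).add h3'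
  rw [integral_add (integrable_const c0) h2', integral_add (i1.const_mul c1) h3',
    integral_add (i2.const_mul c2) h4', integral_add (i3.const_mul c3) (i4.const_mul c4),
    integral_const_mul, integral_const_mul, integral_const_mul, integral_const_mul, integral_const]
  simp [measure_univ]

set_option maxHeartbeats 2000000 in
/-- One-step Lyapunov contraction estimate for MaSS on quadratic losses in the interpolation
setting: with `u = (αv + w)/(1+α)`, `w⁺ = u − ηH̃(u − w*)`, `v⁺ = (1−α)v + αu − δH̃(u−w*)`,
`E[‖v⁺ − w*‖²_{H⁻¹} + (δ/α)‖w⁺ − w*‖²] ≤ (1−α)(‖v − w*‖²_{H⁻¹} + (δ/α)‖w − w*‖²)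
  + (α/μ − δ)‖u − w*‖² + (δ²κ̃ + δη²L/α − 2ηδ/α)‖u − w*‖²_H`. -/
theorem mass_one_step_contraction
    (d : ℕ) (H : Matrix (Fin d) (Fin d) ℝ) (hH : H.PosDef)
    (μ : ℝ) (hμ : 0 < μ)
    (hμleast : IsLeast {c : ℝ | ∃ v : Fin d → ℝ, v ≠ 0 ∧ H.mulVec v = c • v} μ)
    (κt L : ℝ) (hκt : 0 < κt) (hL : 0 < L)
    (Ω : Type) [MeasurableSpace Ω] (P : Measure Ω) [IsProbabilityMeasure P]
    (Ht : Ω → Fin d → Fin d → ℝ)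
    (hmeas : Measurable Ht)
    (hmom : ∀ i j, MemLp (fun ω => Ht ω i j) 4 P)
    (hpsd : ∀ ω, (Matrix.of (Ht ω)).PosSemidef)
    (hmean : Emat P (fun ω => Matrix.of (Ht ω)) = H)
    (hκtcond :
      (κt • H - Emat P (fun ω => Matrix.of (Ht ω) * H⁻¹ * Matrix.of (Ht ω))).PosSemidef)
    (hLcond : (L • H - Emat P (fun ω => Matrix.of (Ht ω) * Matrix.of (Ht ω))).PosSemidef)
    (wstar : Fin d → ℝ)
    (η α δ : ℝ) (hη : 0 < η) (hα : 0 < α) (hα1 : α ≤ 1) (hδ : 0 < δ)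
    (v w u : Fin d → ℝ) (hu : u = (1 / (1 + α)) • (α • v + w)) :
    (∫ ω,
        (qf H⁻¹ (((1 - α) • v + α • u - δ • (Matrix.of (Ht ω)).mulVec (u - wstar)) - wstar)
          + (δ / α) *
            ((u - η • (Matrix.of (Ht ω)).mulVec (u - wstar) - wstar) ⬝ᵥ
              (u - η • (Matrix.of (Ht ω)).mulVec (u - wstar) - wstar))) ∂P)
      ≤ (1 - α) * (qf H⁻¹ (v - wstar) + (δ / α) * ((w - wstar) ⬝ᵥ (w - wstar)))
        + (α / μ - δ) * ((u - wstar) ⬝ᵥ (u - wstar))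
        + (δ ^ 2 * κt + δ * η ^ 2 * L / α - 2 * η * δ / α) * qf H (u - wstar) := by
  have hα0 : α ≠ 0 := ne_of_gt hα
  have h1α : (0:ℝ) < 1 + α := by linarith
  set e : Fin d → ℝ := u - wstar with he
  set x : Fin d → ℝ := v - wstar with hx
  set y : Fin d → ℝ := w - wstar with hy
  have hHerm : H.IsHermitian := hH.1
  have hHinv : H⁻¹.PosDef := hH.inv
  have hHinvTr : H⁻¹ᵀ = H⁻¹ := herm_tr hHinv.1
  have hMTr : ∀ ω, (Matrix.of (Ht ω))ᵀ = Matrix.of (Ht ω) := fun ω => herm_tr (hpsd ω).1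
  set p : Fin d → ℝ := (1-α) • x + α • e with hp
  set p' : Fin d → ℝ := H⁻¹.mulVec p with hp'
  -- integrability of entries
  have hmem2 : ∀ i j, MemLp (fun ω => Ht ω i j) 2 P :=
    fun i j => (hmom i j).mono_exponent (by norm_num)
  have hInt1 : ∀ i j, Integrable (fun ω => Ht ω i j) P :=
    fun i j => (hmom i j).integrable (by norm_num)
  have hInt2 : ∀ i j k l, Integrable (fun ω => Ht ω i j * Ht ω k l) P := by
    intro i j k l
    have := ((hmem2 k l).smul (hmem2 i j) (p := 2) (q := 2) (r := 1)).integrable le_rfl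
    exact this
  have hIntM : ∀ i j, Integrable (fun ω => (Matrix.of (Ht ω)) i j) P := hInt1
  have hIntQ : ∀ i j, Integrable (fun ω => (Matrix.of (Ht ω) * H⁻¹ * Matrix.of (Ht ω)) i j) P := by
    intro i j
    have h : (fun ω => (Matrix.of (Ht ω) * H⁻¹ * Matrix.of (Ht ω)) i j)
        = fun ω => ∑ l, ∑ k, H⁻¹ k l * (Ht ω i k * Ht ω l j) := by
      funext ω
      simp only [Matrix.mul_apply, Finset.sum_mul, Matrix.of_apply]
      refine Finset.sum_congr rfl fun l _ => Finset.sum_congr rfl fun k _ => by ring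
    rw [h]
    exact integrable_finset_sum _ fun l _ => integrable_finset_sum _ fun k _ =>
      (hInt2 i k l j).const_mul _
  have hIntR : ∀ i j, Integrable (fun ω => (Matrix.of (Ht ω) * Matrix.of (Ht ω)) i j) P := by
    intro i j
    have h : (fun ω => (Matrix.of (Ht ω) * Matrix.of (Ht ω)) i j)
        = fun ω => ∑ k, Ht ω i k * Ht ω k j := by
      funext ω; simp [Matrix.mul_apply]
    rw [h]
    exact integrable_finset_sum _ fun k _ => hInt2 i k k j
  -- pointwise rewriting of the integrand
  have hkey : ∀ ω : Ω,
      (qf H⁻¹ (((1 - α) • v + α • u - δ • (Matrix.of (Ht ω)).mulVec e) - wstar)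
          + (δ / α) *
            ((u - η • (Matrix.of (Ht ω)).mulVec e - wstar) ⬝ᵥ
              (u - η • (Matrix.of (Ht ω)).mulVec e - wstar)))
      = (qf H⁻¹ p + (δ/α) * (e ⬝ᵥ e))
        + ((-(2*δ)) * (p' ⬝ᵥ (Matrix.of (Ht ω)).mulVec e)
          + ((-(2*η*δ/α)) * (e ⬝ᵥ (Matrix.of (Ht ω)).mulVec e)
            + (δ^2 * (e ⬝ᵥ (Matrix.of (Ht ω) * H⁻¹ * Matrix.of (Ht ω)).mulVec e)
              + (δ*η^2/α) * (e ⬝ᵥ (Matrix.of (Ht ω) * Matrix.of (Ht ω)).mulVec e)))) := by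
    intro ω
    have hv1 : ((1 - α) • v + α • u - δ • (Matrix.of (Ht ω)).mulVec e) - wstar
        = p - δ • (Matrix.of (Ht ω)).mulVec e := by
      rw [hp, hx, he]; ext i
      simp only [Pi.sub_apply, Pi.add_apply, Pi.smul_apply, smul_eq_mul]
      ring
    have hv2 : u - η • (Matrix.of (Ht ω)).mulVec e - wstar
        = e - η • (Matrix.of (Ht ω)).mulVec e := by
      rw [he]; ext i
      simp only [Pi.sub_apply, Pi.smul_apply, smul_eq_mul]
      ring
    rw [hv1, hv2, qf_expand H⁻¹ hHinvTr p ((Matrix.of (Ht ω)).mulVec e) δ]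
    have h2 : (e - η • (Matrix.of (Ht ω)).mulVec e) ⬝ᵥ (e - η • (Matrix.of (Ht ω)).mulVec e)
        = e ⬝ᵥ e - 2*η*(e ⬝ᵥ (Matrix.of (Ht ω)).mulVec e)
          + η^2 * ((Matrix.of (Ht ω)).mulVec e ⬝ᵥ (Matrix.of (Ht ω)).mulVec e) := by
      have hcomm : ((Matrix.of (Ht ω)).mulVec e) ⬝ᵥ e = e ⬝ᵥ (Matrix.of (Ht ω)).mulVec e :=
        dotProduct_comm _ _
      simp only [dotProduct_sub, sub_dotProduct, dotProduct_smul, smul_dotProduct,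
        smul_eq_mul, hcomm]
      ring
    rw [h2]
    have h3 : p ⬝ᵥ H⁻¹.mulVec ((Matrix.of (Ht ω)).mulVec e) = p' ⬝ᵥ (Matrix.of (Ht ω)).mulVec e := by
      rw [hp', dp_symm H⁻¹ hHinvTr p ((Matrix.of (Ht ω)).mulVec e)]
    have h4 : qf H⁻¹ ((Matrix.of (Ht ω)).mulVec e)
        = e ⬝ᵥ (Matrix.of (Ht ω) * H⁻¹ * Matrix.of (Ht ω)).mulVec e := by
      rw [qf, Matrix.mulVec_mulVec,
        ← dp_symm (Matrix.of (Ht ω)) (hMTr ω) e ((H⁻¹ * Matrix.of (Ht ω)).mulVec e),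
        Matrix.mulVec_mulVec, ← Matrix.mul_assoc]
    have h5 : ((Matrix.of (Ht ω)).mulVec e) ⬝ᵥ ((Matrix.of (Ht ω)).mulVec e)
        = e ⬝ᵥ (Matrix.of (Ht ω) * Matrix.of (Ht ω)).mulVec e := by
      rw [← dp_symm (Matrix.of (Ht ω)) (hMTr ω) e ((Matrix.of (Ht ω)).mulVec e),
        Matrix.mulVec_mulVec]
    rw [h3, h4, h5]
    field_simp
    ring
  simp only [hkey]
  -- compute the integral
  have iG1 : Integrable (fun ω => p' ⬝ᵥ (Matrix.of (Ht ω)).mulVec e) P :=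
    integrable_dpform P _ hIntM p' e
  have iG2 : Integrable (fun ω => e ⬝ᵥ (Matrix.of (Ht ω)).mulVec e) P :=
    integrable_dpform P _ hIntM e e
  have iG3 : Integrable (fun ω => e ⬝ᵥ (Matrix.of (Ht ω) * H⁻¹ * Matrix.of (Ht ω)).mulVec e) P :=
    integrable_dpform P _ hIntQ e e
  have iG4 : Integrable (fun ω => e ⬝ᵥ (Matrix.of (Ht ω) * Matrix.of (Ht ω)).mulVec e) P :=
    integrable_dpform P _ hIntR e e
  have hint : (∫ ω,
        ((qf H⁻¹ p + (δ/α) * (e ⬝ᵥ e))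
        + ((-(2*δ)) * (p' ⬝ᵥ (Matrix.of (Ht ω)).mulVec e)
          + ((-(2*η*δ/α)) * (e ⬝ᵥ (Matrix.of (Ht ω)).mulVec e)
            + (δ^2 * (e ⬝ᵥ (Matrix.of (Ht ω) * H⁻¹ * Matrix.of (Ht ω)).mulVec e)
              + (δ*η^2/α) * (e ⬝ᵥ (Matrix.of (Ht ω) * Matrix.of (Ht ω)).mulVec e))))) ∂P)
      = (qf H⁻¹ p + (δ/α) * (e ⬝ᵥ e))
        + ((-(2*δ)) * (∫ ω, p' ⬝ᵥ (Matrix.of (Ht ω)).mulVec e ∂P)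
          + ((-(2*η*δ/α)) * (∫ ω, e ⬝ᵥ (Matrix.of (Ht ω)).mulVec e ∂P)
            + (δ^2 * (∫ ω, e ⬝ᵥ (Matrix.of (Ht ω) * H⁻¹ * Matrix.of (Ht ω)).mulVec e ∂P)
              + (δ*η^2/α) * (∫ ω, e ⬝ᵥ (Matrix.of (Ht ω) * Matrix.of (Ht ω)).mulVec e ∂P)))) :=
    integral_decomp P _ _ _ _ _ _ _ _ _ iG1 iG2 iG3 iG4
  rw [hint, integral_dpform P _ hIntM p' e, integral_dpform P _ hIntM e e,
    integral_dpform P _ hIntQ e e, integral_dpform P _ hIntR e e, hmean]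
  -- bounds on the expectation terms
  have hT3 : e ⬝ᵥ (Emat P (fun ω => Matrix.of (Ht ω) * H⁻¹ * Matrix.of (Ht ω))).mulVec e
      ≤ κt * qf H e := by
    have h0 := hκtcond.dotProduct_mulVec_nonneg e
    simp only [star_trivial, Matrix.sub_mulVec, Matrix.smul_mulVec, dotProduct_sub,
      dotProduct_smul, smul_eq_mul] at h0
    rw [qf]; linarith
  have hT4 : e ⬝ᵥ (Emat P (fun ω => Matrix.of (Ht ω) * Matrix.of (Ht ω))).mulVec e
      ≤ L * qf H e := by
    have h0 := hLcond.dotProduct_mulVec_nonneg e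
    simp only [star_trivial, Matrix.sub_mulVec, Matrix.smul_mulVec, dotProduct_sub,
      dotProduct_smul, smul_eq_mul] at h0
    rw [qf]; linarith
  have hpe : p' ⬝ᵥ H.mulVec e = p ⬝ᵥ e := by
    rw [hp', ← dp_symm H⁻¹ hHinvTr p (H.mulVec e), Matrix.mulVec_mulVec,
      Matrix.nonsing_inv_mul _ hH.det_pos.ne'.isUnit, Matrix.one_mulVec]
  have heHe : e ⬝ᵥ H.mulVec e = qf H e := rfl
  -- convexity of the quadratic form
  have hconv : qf H⁻¹ p ≤ (1-α) * qf H⁻¹ x + α * qf H⁻¹ e := by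
    have hcross : e ⬝ᵥ H⁻¹.mulVec x = x ⬝ᵥ H⁻¹.mulVec e := dp_symm' H⁻¹ hHinvTr e x
    have hid : (1-α) * qf H⁻¹ x + α * qf H⁻¹ e - qf H⁻¹ p
        = α*(1-α) * qf H⁻¹ (x - e) := by
      simp only [qf, hp, Matrix.mulVec_add, Matrix.mulVec_smul, Matrix.mulVec_sub,
        dotProduct_add, add_dotProduct, dotProduct_sub, sub_dotProduct,
        dotProduct_smul, smul_dotProduct, smul_eq_mul, hcross]
      ring
    have hnn : 0 ≤ qf H⁻¹ (x - e) := by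
      have := hHinv.posSemidef.dotProduct_mulVec_nonneg (x - e)
      simpa [qf] using this
    nlinarith [mul_nonneg (mul_nonneg hα.le (by linarith : (0:ℝ) ≤ 1-α)) hnn]
  have heig : μ * qf H⁻¹ e ≤ e ⬝ᵥ e :=
    Hinv_qf_le H hH μ hμ (fun c hc => hμleast.2 hc) e
  -- relation between y and e, x
  have hw : (1+α) • u = α • v + w := by
    rw [hu, smul_smul, mul_one_div, div_self h1α.ne', one_smul]
  have hYY : y ⬝ᵥ y = (1+α)^2*(e ⬝ᵥ e) - 2*α*(1+α)*(x ⬝ᵥ e) + α^2*(x ⬝ᵥ x) := by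
    have hye : y = (1+α) • e - α • x := by
      rw [hy, he, hx]; ext i
      have h1 := congrFun hw i
      simp only [Pi.smul_apply, Pi.add_apply, smul_eq_mul] at h1
      simp only [Pi.sub_apply, Pi.smul_apply, smul_eq_mul]
      linarith
    have hcomm : e ⬝ᵥ x = x ⬝ᵥ e := dotProduct_comm _ _
    rw [hye]
    simp only [dotProduct_sub, sub_dotProduct, dotProduct_smul, smul_dotProduct,
      smul_eq_mul, hcomm]
    ring
  have hpe2 : p ⬝ᵥ e = (1-α)*(x ⬝ᵥ e) + α*(e ⬝ᵥ e) := by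
    rw [hp]
    simp only [add_dotProduct, smul_dotProduct, smul_eq_mul]
  have hS : 0 ≤ (x ⬝ᵥ x) - 2*(x ⬝ᵥ e) + (e ⬝ᵥ e) := by
    have h0 : (x - e) ⬝ᵥ (x - e) = x ⬝ᵥ x - 2*(x ⬝ᵥ e) + e ⬝ᵥ e := by
      have hcomm : e ⬝ᵥ x = x ⬝ᵥ e := dotProduct_comm _ _
      simp only [dotProduct_sub, sub_dotProduct, hcomm]
      ring
    have h1 : 0 ≤ (x - e) ⬝ᵥ (x - e) :=
      Finset.sum_nonneg fun i _ => mul_self_nonneg _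
    linarith
  -- final scalar inequality
  have hBq : α * qf H⁻¹ e ≤ α/μ * (e ⬝ᵥ e) := by
    rw [div_mul_eq_mul_div, le_div_iff₀ hμ]
    have := mul_le_mul_of_nonneg_left heig hα.le
    nlinarith
  have hdiff : (1-α)*(δ/α)*(y ⬝ᵥ y) - δ*(e ⬝ᵥ e)
        - ((δ/α)*(e ⬝ᵥ e) - 2*δ*((1-α)*(x ⬝ᵥ e) + α*(e ⬝ᵥ e)))
      = (δ/α)*α^2*(1-α)*((x ⬝ᵥ x) - 2*(x ⬝ᵥ e) + (e ⬝ᵥ e)) := by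
    rw [hYY]; field_simp; ring
  have hdiffnn : 0 ≤ (δ/α)*α^2*(1-α)*((x ⬝ᵥ x) - 2*(x ⬝ᵥ e) + (e ⬝ᵥ e)) :=
    mul_nonneg (mul_nonneg (mul_nonneg (div_nonneg hδ.le hα.le) (sq_nonneg α))
      (by linarith)) hS
  have hG3 : δ^2 * (e ⬝ᵥ (Emat P (fun ω => Matrix.of (Ht ω) * H⁻¹ * Matrix.of (Ht ω))).mulVec e)
      ≤ δ^2 * (κt * qf H e) := by
    exact mul_le_mul_of_nonneg_left hT3 (sq_nonneg δ)
  have hG4 : (δ*η^2/α) * (e ⬝ᵥ (Emat P (fun ω => Matrix.of (Ht ω) * Matrix.of (Ht ω))).mulVec e)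
      ≤ (δ*η^2/α) * (L * qf H e) := by
    refine mul_le_mul_of_nonneg_left hT4 ?_
    positivity
  rw [hpe, heHe]
  have hexp1 : (1 - α) * (qf H⁻¹ x + δ / α * (y ⬝ᵥ y))
      = (1-α) * qf H⁻¹ x + (1-α)*(δ/α)*(y ⬝ᵥ y) := by ring
  have hexp2 : (δ ^ 2 * κt + δ * η ^ 2 * L / α - 2 * η * δ / α) * qf H e
      = δ^2 * (κt * qf H e) + (δ*η^2/α) * (L * qf H e) + (-(2*η*δ/α)) * qf H e := by
    field_simp; ring
  have hexp3 : (α / μ - δ) * (e ⬝ᵥ e) = α/μ * (e ⬝ᵥ e) - δ * (e ⬝ᵥ e) := by ring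
  rw [hexp1, hexp2, hexp3, hpe2]
  linarith [hconv, hBq, hG3, hG4, hdiff, hdiffnn]
end

section
/- Let f : ℝ^d → ℝ be a differentiable convex nonnegative function with f(w*) = 0 for some w* ∈ ℝ^d, and assume f is L_m-smooth. Suppose there exist ε ∈ (0,1) and a differentiable function g : ℝ^d → ℝ that is (1/L_m)-strongly convex and (1/μ)-smooth, with g ≥ 0, g(w*) = 0, and ⟨∇g(x), ∇f(z)⟩ ≥ (1−ε)⟨x − w*, z − w*⟩ for all x, z ∈ ℝ^d, where 0 < μ ≤ L_m. Run MaSS with a stochastic gradient oracle satisfying, at each step t conditionally on the past, E[G_t] = ∇f(u_t) and E[‖G_t‖²] ≤ 2 L_m f(u_t), using hyper-parameters η = 1/(2L_m), α = (1−ε)/(2κ_m), δ = 1/(2L_m), where κ_m = L_m/μ. Then there exists a constant C (depending on the initialization) such that for all t ≥ 0, E[f(w_t)] ≤ C · (1 − (1−ε)/(2κ_m))^t. -/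
open MeasureTheory RealInnerProductSpace


section AuxLemmas

variable {E : Type*} [NormedAddCommGroup E] [InnerProductSpace ℝ E]

lemma le_of_sq_le_sq'' {a b : ℝ} (hb : 0 ≤ b) (h : a ^ 2 ≤ b ^ 2) (ha : 0 ≤ a) : a ≤ b := by
  nlinarith

/-- Gradient inequality for convex differentiable functions. -/
lemma convexOn_grad_ineq [CompleteSpace E] {f : E → ℝ} {f' : E → E}
    (hconv : ConvexOn ℝ Set.univ f) (hf' : ∀ x, HasGradientAt f (f' x) x) (x z : E) :
    f x + ⟪f' x, z - x⟫ ≤ f z := by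
  have hline : HasDerivAt (fun t : ℝ => f (x + t • (z - x))) ⟪f' x, z - x⟫ 0 := by
    have h1 : HasDerivAt (fun t : ℝ => x + t • (z - x)) (z - x) 0 := by
      simpa using ((hasDerivAt_id (0 : ℝ)).smul_const (z - x)).const_add x
    have h2 : HasFDerivAt f (InnerProductSpace.toDual ℝ E (f' x)) (x + (0 : ℝ) • (z - x)) := by
      simpa using (hf' x).hasFDerivAt
    have h3 := h2.comp_hasDerivAt 0 h1
    simp only [InnerProductSpace.toDual_apply_apply] at h3; exact h3
  have hslope : Filter.Tendsto (slope (fun t : ℝ => f (x + t • (z - x))) 0)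
      (nhdsWithin 0 (Set.Ioi 0)) (nhds ⟪f' x, z - x⟫) := by
    refine (hasDerivAt_iff_tendsto_slope.mp hline).mono_left (nhdsWithin_mono _ ?_)
    intro t ht
    exact Set.mem_compl_singleton_iff.mpr (ne_of_gt ht)
  have hub : ∀ᶠ t in nhdsWithin (0:ℝ) (Set.Ioi 0),
      slope (fun s : ℝ => f (x + s • (z - x))) 0 t ≤ f z - f x := by
    filter_upwards [Ioc_mem_nhdsGT (zero_lt_one)] with t ht
    have hcvx : f (x + t • (z - x)) ≤ (1 - t) * f x + t * f z := by
      have h := hconv.2 (Set.mem_univ x) (Set.mem_univ z)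
        (by linarith [ht.2] : (0:ℝ) ≤ 1 - t) (le_of_lt ht.1) (by ring)
      have heq : (1 - t) • x + t • z = x + t • (z - x) := by
        rw [smul_sub, sub_smul, one_smul]; abel
      rwa [heq] at h
    rw [slope_def_field]
    have h0 : x + (0:ℝ) • (z - x) = x := by simp
    rw [h0, sub_zero, div_le_iff₀ ht.1]
    nlinarith [ht.1]
  have := le_of_tendsto hslope hub
  linarith

/-- The gradient vanishes at a global minimum (with a smoothness upper bound). -/
lemma grad_zero_of_min {h : E → ℝ} {h' : E → E} {x₀ : E} {c : ℝ} (hc : 0 < c)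
    (hmin : ∀ x, h x₀ ≤ h x)
    (hsm : ∀ x z, h x ≤ h z + ⟪h' z, x - z⟫ + c / 2 * ‖x - z‖ ^ 2) : h' x₀ = 0 := by
  have h1 := hsm (x₀ - (1 / c) • h' x₀) x₀
  have he : x₀ - (1 / c) • h' x₀ - x₀ = -((1 / c) • h' x₀) := by abel
  rw [he, inner_neg_right, real_inner_smul_right, real_inner_self_eq_norm_sq, norm_neg,
    norm_smul, Real.norm_eq_abs, abs_of_pos (by positivity : (0:ℝ) < 1 / c)] at h1
  have h2 := hmin (x₀ - (1 / c) • h' x₀)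
  have h3 : c / 2 * (1 / c * ‖h' x₀‖) ^ 2 = 1 / (2 * c) * ‖h' x₀‖ ^ 2 := by
    field_simp
  rw [h3] at h1
  have h4 : ‖h' x₀‖ ^ 2 ≤ 0 := by
    have hgap : 1 / c * ‖h' x₀‖ ^ 2 - 1 / (2 * c) * ‖h' x₀‖ ^ 2
        = 1 / (2 * c) * ‖h' x₀‖ ^ 2 := by field_simp; ring
    have hpos : 0 < 1 / (2 * c) := by positivity
    nlinarith [hgap, hpos]
  have h5 : ‖h' x₀‖ = 0 := by nlinarith [norm_nonneg (h' x₀)]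
  exact norm_eq_zero.mp h5

/-- Gradients of convex functions with smoothness are Lipschitz. -/
lemma grad_lipschitz {h : E → ℝ} {h' : E → E} {c : ℝ} (hc : 0 < c)
    (hgrad : ∀ x z, h x + ⟪h' x, z - x⟫ ≤ h z)
    (hsm : ∀ x z, h x ≤ h z + ⟪h' z, x - z⟫ + c / 2 * ‖x - z‖ ^ 2) :
    ∀ x y, ‖h' y - h' x‖ ≤ c * ‖y - x‖ := by
  intro x y
  set Δ := h' y - h' x with hΔ
  have key : 1 / (2 * c) * ‖Δ‖ ^ 2 ≤ h y - h x - ⟪h' x, y - x⟫ := by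
    have h1 := hgrad x (y - (1 / c) • Δ)
    have h2 := hsm (y - (1 / c) • Δ) y
    have he1 : y - (1 / c) • Δ - y = -((1 / c) • Δ) := by abel
    have he2 : y - (1 / c) • Δ - x = (y - x) - (1 / c) • Δ := by abel
    rw [he1] at h2
    rw [he2] at h1
    rw [inner_neg_right, real_inner_smul_right, norm_neg, norm_smul, Real.norm_eq_abs,
      abs_of_pos (by positivity : (0:ℝ) < 1 / c)] at h2
    rw [inner_sub_right, real_inner_smul_right] at h1
    have hΔ2 : ⟪h' y, Δ⟫ - ⟪h' x, Δ⟫ = ‖Δ‖ ^ 2 := by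
      rw [← inner_sub_left, ← hΔ, real_inner_self_eq_norm_sq]
    have h3 : c / 2 * (1 / c * ‖Δ‖) ^ 2 = 1 / (2 * c) * ‖Δ‖ ^ 2 := by field_simp
    rw [h3] at h2
    have hΔ2' : 1 / c * ⟪h' y, Δ⟫ - 1 / c * ⟪h' x, Δ⟫ = 1 / c * ‖Δ‖ ^ 2 := by
      rw [← mul_sub, hΔ2]
    have hcc : 1 / c * ‖Δ‖ ^ 2 - 1 / (2 * c) * ‖Δ‖ ^ 2 = 1 / (2 * c) * ‖Δ‖ ^ 2 := by
      field_simp; ring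
    linarith
  have key2 : h y - h x - ⟪h' x, y - x⟫ ≤ c / 2 * ‖y - x‖ ^ 2 := by
    have := hsm y x; linarith
  have hk := le_trans key key2
  have hsq : ‖Δ‖ ^ 2 ≤ (c * ‖y - x‖) ^ 2 := by
    have h2c : (2 * c) * (1 / (2 * c) * ‖Δ‖ ^ 2) = ‖Δ‖ ^ 2 := by field_simp
    calc ‖Δ‖ ^ 2 = (2 * c) * (1 / (2 * c) * ‖Δ‖ ^ 2) := h2c.symm
      _ ≤ (2 * c) * (c / 2 * ‖y - x‖ ^ 2) :=
          mul_le_mul_of_nonneg_left hk (by positivity)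
      _ = (c * ‖y - x‖) ^ 2 := by ring
  exact le_of_sq_le_sq'' (by positivity) hsq (norm_nonneg _)

variable {α : Type*} {mα : MeasurableSpace α} {μ : Measure α}

lemma integrable_inner_of_memL2 {A B : α → E} (hA : MemLp A 2 μ) (hB : MemLp B 2 μ) :
    Integrable (fun ω => ⟪A ω, B ω⟫) μ := by
  have hA2 : Integrable (fun ω => ‖A ω‖ ^ 2) μ :=
    (memLp_two_iff_integrable_sq_norm hA.aestronglyMeasurable).mp hA
  have hB2 : Integrable (fun ω => ‖B ω‖ ^ 2) μ :=
    (memLp_two_iff_integrable_sq_norm hB.aestronglyMeasurable).mp hB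
  refine ((hA2.add hB2).const_mul (1/2)).mono'
      (hA.aestronglyMeasurable.inner hB.aestronglyMeasurable) ?_
  filter_upwards with ω
  have h1 := abs_real_inner_le_norm (A ω) (B ω)
  have h2 : ‖A ω‖ * ‖B ω‖ ≤ 1/2 * (‖A ω‖^2 + ‖B ω‖^2) := by
    nlinarith [sq_nonneg (‖A ω‖ - ‖B ω‖)]
  rw [Real.norm_eq_abs]
  calc |⟪A ω, B ω⟫| ≤ ‖A ω‖ * ‖B ω‖ := h1
    _ ≤ 1/2 * (‖A ω‖^2 + ‖B ω‖^2) := h2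

lemma integrable_mul_of_memL2 {A B : α → ℝ} (hA : MemLp A 2 μ) (hB : MemLp B 2 μ) :
    Integrable (fun ω => A ω * B ω) μ := by
  have := integrable_inner_of_memL2 (E := ℝ) hA hB
  simpa [RCLike.inner_apply, conj_trivial, mul_comm] using this

lemma euclidean_inner_eq_sum {d : ℕ} (a b : EuclideanSpace ℝ (Fin d)) :
    ⟪a, b⟫ = ∑ i, a i * b i := by
  simp [PiLp.inner_apply, RCLike.inner_apply, conj_trivial, mul_comm]

lemma euclidean_abs_coord_le_norm {d : ℕ} (x : EuclideanSpace ℝ (Fin d)) (i : Fin d) :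
    |x i| ≤ ‖x‖ := by
  rw [EuclideanSpace.norm_eq]
  have h1 : |x i| = Real.sqrt (|x i| ^ 2) := by rw [Real.sqrt_sq_eq_abs, abs_abs]
  rw [h1]
  apply Real.sqrt_le_sqrt
  rw [sq_abs]
  have := Finset.single_le_sum (f := fun j => ‖x j‖ ^ 2) (fun j _ => by positivity)
    (Finset.mem_univ i)
  simpa [Real.norm_eq_abs, sq_abs] using this

lemma memL2_coord {d : ℕ} {A : α → EuclideanSpace ℝ (Fin d)} (hA : MemLp A 2 μ) (i : Fin d) :
    MemLp (fun ω => A ω i) 2 μ := by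
  refine MemLp.of_le_mul (c := 1) hA ?_ ?_
  · exact (EuclideanSpace.proj (𝕜 := ℝ) i).continuous.comp_aestronglyMeasurable
      hA.aestronglyMeasurable
  · filter_upwards with ω
    rw [one_mul, Real.norm_eq_abs]
    exact euclidean_abs_coord_le_norm (A ω) i

end AuxLemmas

set_option maxHeartbeats 2000000 in
/-- Convergence of MaSS for general convex losses in the interpolation setting
(Theorem 4): under the existence of a `(1/L_m)`-strongly convex, `(1/μ)`-smooth Lyapunov
function `g` correlated with `f`, running MaSS with an unbiased stochastic gradient oracle
whose conditional second moment is bounded by `2L_m f(u_t)`, with hyper-parameters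
`η = 1/(2L_m)`, `α = (1−ε)/(2κ_m)`, `δ = 1/(2L_m)` where `κ_m = L_m/μ`, there is a
constant `C` with `E[f(w_t)] ≤ C (1 − (1−ε)/(2κ_m))^t`. -/
theorem mass_convex_convergence
    (d : ℕ)
    (f g : EuclideanSpace ℝ (Fin d) → ℝ)
    (f' g' : EuclideanSpace ℝ (Fin d) → EuclideanSpace ℝ (Fin d))
    (hf' : ∀ x, HasGradientAt f (f' x) x)
    (hg' : ∀ x, HasGradientAt g (g' x) x)
    (hfconv : ConvexOn ℝ Set.univ f)
    (hfnonneg : ∀ x, 0 ≤ f x)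
    (wstar : EuclideanSpace ℝ (Fin d)) (hfws : f wstar = 0)
    (Lm μ : ℝ) (hμ : 0 < μ) (hμL : μ ≤ Lm)
    (hfsmooth : ∀ x z, f x ≤ f z + ⟪f' z, x - z⟫ + Lm / 2 * ‖x - z‖ ^ 2)
    (ε : ℝ) (hε : ε ∈ Set.Ioo (0 : ℝ) 1)
    (hgsc : ∀ x z, g z + ⟪g' z, x - z⟫ + (1 / Lm) / 2 * ‖x - z‖ ^ 2 ≤ g x)
    (hgsm : ∀ x z, g x ≤ g z + ⟪g' z, x - z⟫ + (1 / μ) / 2 * ‖x - z‖ ^ 2)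
    (hgnonneg : ∀ x, 0 ≤ g x) (hgws : g wstar = 0)
    (hcorr : ∀ x z, (1 - ε) * ⟪x - wstar, z - wstar⟫ ≤ ⟪g' x, f' z⟫)
    (η α δ : ℝ)
    (hηdef : η = 1 / (2 * Lm)) (hαdef : α = (1 - ε) / (2 * (Lm / μ)))
    (hδdef : δ = 1 / (2 * Lm))
    (Ω : Type) [m0 : MeasurableSpace Ω] (P : Measure Ω) [IsProbabilityMeasure P]
    (ℱ : Filtration ℕ m0)
    (G : ℕ → Ω → EuclideanSpace ℝ (Fin d))
    (w v u : ℕ → Ω → EuclideanSpace ℝ (Fin d))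
    (w₀ : EuclideanSpace ℝ (Fin d))
    (hw0 : ∀ ω, w 0 ω = w₀) (hv0 : ∀ ω, v 0 ω = w₀) (hu0 : ∀ ω, u 0 ω = w₀)
    (hw : ∀ t ω, w (t + 1) ω = u t ω - η • G t ω)
    (hv : ∀ t ω, v (t + 1) ω = (1 - α) • v t ω + α • u t ω - δ • G t ω)
    (hu : ∀ t ω, u (t + 1) ω = (1 / (1 + α)) • (α • v (t + 1) ω + w (t + 1) ω))
    (huadapted : ∀ t, StronglyMeasurable[ℱ t] (u t))
    (hGmeas : ∀ t, StronglyMeasurable[ℱ (t + 1)] (G t))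
    (hGint : ∀ t, Integrable (G t) P)
    (hGsqint : ∀ t, Integrable (fun ω => ‖G t ω‖ ^ 2) P)
    (hGmean : ∀ t, P[G t | ℱ t] =ᵐ[P] fun ω => f' (u t ω))
    (hGsq : ∀ t, P[(fun ω => ‖G t ω‖ ^ 2) | ℱ t] ≤ᵐ[P] fun ω => 2 * Lm * f (u t ω)) :
    ∃ C : ℝ, ∀ t : ℕ,
      (∫ ω, f (w t ω) ∂P) ≤ C * (1 - (1 - ε) / (2 * (Lm / μ))) ^ t := by
  classical
  obtain ⟨hε0, hε1⟩ := hε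
  have h1ε : (0:ℝ) < 1 - ε := by linarith
  have hL : (0:ℝ) < Lm := lt_of_lt_of_le hμ hμL
  have hη_pos : 0 < η := by rw [hηdef]; positivity
  have hα_pos : 0 < α := by
    rw [hαdef]
    have h1 : (0:ℝ) < Lm / μ := by positivity
    positivity
  have hαne : (1:ℝ) + α ≠ 0 := by positivity
  -- Step 0: with these hyper-parameters the three sequences collapse: u = v = w.
  have huw : ∀ t, ∀ ω : Ω, u t ω = w t ω ∧ v t ω = w t ω := by
    intro t
    induction t with
    | zero => intro ω; rw [hw0, hv0, hu0]; exact ⟨rfl, rfl⟩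
    | succ n ih =>
      intro ω
      have hww : w (n + 1) ω = w n ω - η • G n ω := by rw [hw n ω, (ih ω).1]
      have hvv : v (n + 1) ω = w (n + 1) ω := by
        rw [hv n ω, (ih ω).1, (ih ω).2, hww, hδdef, ← hηdef, ← add_smul]
        have h1 : (1 - α) + α = (1:ℝ) := by ring
        rw [h1, one_smul]
      have huu : u (n + 1) ω = w (n + 1) ω := by
        rw [hu n ω, hvv]
        have h1 : α • w (n + 1) ω + w (n + 1) ω = (α + 1) • w (n + 1) ω := by
          rw [add_smul, one_smul]
        have h2 : (1 / (1 + α)) * (α + 1) = 1 := by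
          rw [add_comm α 1, one_div, inv_mul_cancel₀ hαne]
        rw [h1, smul_smul, h2, one_smul]
      exact ⟨huu, hvv⟩
  -- Deterministic facts about f and g.
  have hfmin : ∀ x, f wstar ≤ f x := fun x => by rw [hfws]; exact hfnonneg x
  have hgmin : ∀ x, g wstar ≤ g x := fun x => by rw [hgws]; exact hgnonneg x
  have hf'ws : f' wstar = 0 := grad_zero_of_min hL hfmin hfsmooth
  have hg'ws : g' wstar = 0 :=
    grad_zero_of_min (by positivity : (0:ℝ) < 1 / μ) hgmin hgsm
  have hfub : ∀ x, f x ≤ Lm / 2 * ‖x - wstar‖ ^ 2 := by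
    intro x
    have h := hfsmooth x wstar
    rw [hfws, hf'ws, inner_zero_left] at h
    linarith
  have hgub : ∀ x, g x ≤ (1 / μ) / 2 * ‖x - wstar‖ ^ 2 := by
    intro x
    have h := hgsm x wstar
    rw [hgws, hg'ws, inner_zero_left] at h
    linarith
  have hgub2 : ∀ x, 2 * μ * g x ≤ ‖x - wstar‖ ^ 2 := by
    intro x
    have h := mul_le_mul_of_nonneg_left (hgub x) (by positivity : (0:ℝ) ≤ 2 * μ)
    have he : 2 * μ * ((1 / μ) / 2 * ‖x - wstar‖ ^ 2) = ‖x - wstar‖ ^ 2 := by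
      field_simp
    linarith [he ▸ h]
  have hgradf : ∀ x z, f x + ⟪f' x, z - x⟫ ≤ f z :=
    fun x z => convexOn_grad_ineq hfconv hf' x z
  have hXF : ∀ x, f x ≤ ⟪x - wstar, f' x⟫ := by
    intro x
    have h := hgradf x wstar
    rw [hfws] at h
    have he : wstar - x = -(x - wstar) := by abel
    rw [he, inner_neg_right] at h
    rw [real_inner_comm]
    linarith
  have hQ : ∀ x, (1 - ε) * ‖x - wstar‖ ^ 2 ≤ ⟪g' x, f' x⟫ := by
    intro x
    have h := hcorr x x
    rwa [real_inner_self_eq_norm_sq] at h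
  have hgrad_g : ∀ x z, g x + ⟪g' x, z - x⟫ ≤ g z := by
    intro x z
    have h := hgsc z x
    have hnn : (0:ℝ) ≤ (1 / Lm) / 2 * ‖z - x‖ ^ 2 := by positivity
    linarith
  have hf'lip := grad_lipschitz hL hgradf hfsmooth
  have hg'lip := grad_lipschitz (by positivity : (0:ℝ) < 1 / μ) hgrad_g hgsm
  have hfcont : Continuous f := continuous_iff_continuousAt.mpr fun x => (hf' x).continuousAt
  have hgcont : Continuous g := continuous_iff_continuousAt.mpr fun x => (hg' x).continuousAt
  have hf'cont : Continuous f' := by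
    have hlip : LipschitzWith (Real.toNNReal Lm) f' := by
      apply LipschitzWith.of_dist_le_mul
      intro x y
      rw [dist_eq_norm, dist_eq_norm]
      calc ‖f' x - f' y‖ ≤ Lm * ‖x - y‖ := hf'lip y x
        _ = (Real.toNNReal Lm : ℝ) * ‖x - y‖ := by rw [Real.coe_toNNReal _ hL.le]
    exact hlip.continuous
  have hg'cont : Continuous g' := by
    have hlip : LipschitzWith (Real.toNNReal (1 / μ)) g' := by
      apply LipschitzWith.of_dist_le_mul
      intro x y
      rw [dist_eq_norm, dist_eq_norm]
      calc ‖g' x - g' y‖ ≤ (1 / μ) * ‖x - y‖ := hg'lip y x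
        _ = (Real.toNNReal (1 / μ) : ℝ) * ‖x - y‖ := by
            rw [Real.coe_toNNReal _ (by positivity : (0:ℝ) ≤ 1 / μ)]
    exact hlip.continuous
  have hf'b : ∀ x, ‖f' x‖ ≤ Lm * ‖x - wstar‖ := by
    intro x
    have h := hf'lip wstar x
    rwa [hf'ws, sub_zero] at h
  have hg'b : ∀ x, ‖g' x‖ ≤ (1 / μ) * ‖x - wstar‖ := by
    intro x
    have h := hg'lip wstar x
    rwa [hg'ws, sub_zero] at h
  -- Measurability and integrability.
  have husw : ∀ t, u t = w t := fun t => funext fun ω => (huw t ω).1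
  have hWsmF : ∀ t, StronglyMeasurable[ℱ t] (w t) := fun t => husw t ▸ huadapted t
  have hWsm : ∀ t, StronglyMeasurable (w t) := fun t => (hWsmF t).mono (ℱ.le t)
  have hGasm : ∀ t, AEStronglyMeasurable (G t) P :=
    fun t => ((hGmeas t).mono (ℱ.le (t + 1))).aestronglyMeasurable
  have hGL2 : ∀ t, MemLp (G t) 2 P :=
    fun t => (memLp_two_iff_integrable_sq_norm (hGasm t)).mpr (hGsqint t)
  have hWL2 : ∀ t, MemLp (fun ω => w t ω - wstar) 2 P := by
    intro t
    induction t with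
    | zero =>
      have he : (fun ω : Ω => w 0 ω - wstar) = fun _ => w₀ - wstar :=
        funext fun ω => by rw [hw0]
      rw [he]; exact memLp_const _
    | succ n ih =>
      have he : (fun ω : Ω => w (n + 1) ω - wstar)
          = (fun ω => w n ω - wstar) - fun ω => η • G n ω := by
        funext ω
        simp only [Pi.sub_apply]
        rw [hw n ω, (huw n ω).1]
        abel
      rw [he]
      exact ih.sub ((hGL2 n).const_smul η)
  have hAsm : ∀ t, StronglyMeasurable (fun ω => w t ω - wstar) :=
    fun t => (hWsm t).sub stronglyMeasurable_const
  have hA2int : ∀ t, Integrable (fun ω => ‖w t ω - wstar‖ ^ 2) P :=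
    fun t => (memLp_two_iff_integrable_sq_norm (hAsm t).aestronglyMeasurable).mp (hWL2 t)
  have hgint : ∀ t, Integrable (fun ω => g (w t ω)) P := by
    intro t
    refine ((hA2int t).const_mul ((1 / μ) / 2)).mono'
      ((hgcont.comp_stronglyMeasurable (hWsm t)).aestronglyMeasurable) ?_
    filter_upwards with ω
    rw [Real.norm_eq_abs, abs_of_nonneg (hgnonneg _)]
    exact hgub (w t ω)
  have hfint : ∀ t, Integrable (fun ω => f (w t ω)) P := by
    intro t
    refine ((hA2int t).const_mul (Lm / 2)).mono'
      ((hfcont.comp_stronglyMeasurable (hWsm t)).aestronglyMeasurable) ?_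
    filter_upwards with ω
    rw [Real.norm_eq_abs, abs_of_nonneg (hfnonneg _)]
    exact hfub (w t ω)
  have hF'L2 : ∀ t, MemLp (fun ω => f' (w t ω)) 2 P := by
    intro t
    refine MemLp.of_le_mul (c := Lm) (hWL2 t)
      ((hf'cont.comp_stronglyMeasurable (hWsm t)).aestronglyMeasurable) ?_
    filter_upwards with ω
    exact hf'b (w t ω)
  have hG'L2 : ∀ t, MemLp (fun ω => g' (w t ω)) 2 P := by
    intro t
    refine MemLp.of_le_mul (c := 1 / μ) (hWL2 t)
      ((hg'cont.comp_stronglyMeasurable (hWsm t)).aestronglyMeasurable) ?_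
    filter_upwards with ω
    exact hg'b (w t ω)
  have hcL2 : ∀ t, MemLp (fun ω => (w t ω - wstar) + μ • g' (w t ω)) 2 P := by
    intro t
    have h2 : MemLp (fun ω => μ • g' (w t ω)) 2 P := (hG'L2 t).const_smul μ
    exact (hWL2 t).add h2
  have hcsmF : ∀ t, StronglyMeasurable[ℱ t] (fun ω => (w t ω - wstar) + μ • g' (w t ω)) := by
    intro t
    exact ((hWsmF t).sub stronglyMeasurable_const).add
      ((hg'cont.comp_stronglyMeasurable (hWsmF t)).const_smul μ)
  have hF'int : ∀ t, Integrable (fun ω => f' (w t ω)) P :=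
    fun t => (hF'L2 t).integrable one_le_two
  have hGmean' : ∀ t, P[G t | ℱ t] =ᵐ[P] fun ω => f' (w t ω) := by
    intro t
    have h := hGmean t
    have he : (fun ω => f' (u t ω)) = fun ω => f' (w t ω) := by
      funext ω; rw [(huw t ω).1]
    rwa [he] at h
  have hSF : ∀ t, SigmaFinite (P.trim (ℱ.le t)) := fun t => inferInstance
  -- coordinatewise conditional expectation of G.
  have hGi : ∀ t (i : Fin d),
      (fun ω => f' (w t ω) i) =ᵐ[P] P[(fun ω => G t ω i) | ℱ t] := by
    intro t i
    haveI := hSF t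
    refine ae_eq_condExp_of_forall_setIntegral_eq (ℱ.le t)
      ((EuclideanSpace.proj (𝕜 := ℝ) i).integrable_comp (hGint t)) ?_ ?_ ?_
    · intro s _ _
      exact ((EuclideanSpace.proj (𝕜 := ℝ) i).integrable_comp (hF'int t)).integrableOn
    · intro s hs _
      have hres : Integrable (G t) (P.restrict s) := (hGint t).restrict
      have hres' : Integrable (fun ω => f' (w t ω)) (P.restrict s) := (hF'int t).restrict
      have h1 : (∫ ω in s, G t ω i ∂P) = (EuclideanSpace.proj (𝕜 := ℝ) i) (∫ ω in s, G t ω ∂P) :=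
        (EuclideanSpace.proj (𝕜 := ℝ) i).integral_comp_comm hres
      have h2 : (∫ ω in s, f' (w t ω) i ∂P)
          = (EuclideanSpace.proj (𝕜 := ℝ) i) (∫ ω in s, f' (w t ω) ∂P) :=
        (EuclideanSpace.proj (𝕜 := ℝ) i).integral_comp_comm hres'
      have h3 : (∫ ω in s, f' (w t ω) ∂P) = ∫ ω in s, G t ω ∂P := by
        rw [← setIntegral_condExp (ℱ.le t) (hGint t) hs]
        refine setIntegral_congr_ae (ℱ.le t s hs) ?_
        filter_upwards [hGmean' t] with ω hω _
        rw [hω]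
      rw [h2, h3, ← h1]
    · exact ((EuclideanSpace.proj (𝕜 := ℝ) i).continuous.comp_stronglyMeasurable
        (hf'cont.comp_stronglyMeasurable (hWsmF t))).aestronglyMeasurable
  -- the key identity for the expectation of the inner product against G.
  have hinner_eq : ∀ t,
      (∫ ω, ⟪(w t ω - wstar) + μ • g' (w t ω), G t ω⟫ ∂P)
        = ∫ ω, ⟪(w t ω - wstar) + μ • g' (w t ω), f' (w t ω)⟫ ∂P := by
    intro t
    haveI := hSF t
    have hciL2 : ∀ i : Fin d, MemLp (fun ω => ((w t ω - wstar) + μ • g' (w t ω)) i) 2 P :=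
      fun i => memL2_coord (hcL2 t) i
    have hGiL2 : ∀ i : Fin d, MemLp (fun ω => G t ω i) 2 P :=
      fun i => memL2_coord (hGL2 t) i
    have hF'iL2 : ∀ i : Fin d, MemLp (fun ω => f' (w t ω) i) 2 P :=
      fun i => memL2_coord (hF'L2 t) i
    have hprod : ∀ i : Fin d,
        Integrable (fun ω => ((w t ω - wstar) + μ • g' (w t ω)) i * G t ω i) P :=
      fun i => integrable_mul_of_memL2 (hciL2 i) (hGiL2 i)
    have hprod' : ∀ i : Fin d,
        Integrable (fun ω => ((w t ω - wstar) + μ • g' (w t ω)) i * f' (w t ω) i) P :=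
      fun i => integrable_mul_of_memL2 (hciL2 i) (hF'iL2 i)
    have hsum : (fun ω => ⟪(w t ω - wstar) + μ • g' (w t ω), G t ω⟫)
        = fun ω => ∑ i, ((w t ω - wstar) + μ • g' (w t ω)) i * G t ω i :=
      funext fun ω => euclidean_inner_eq_sum _ _
    have hsum' : (fun ω => ⟪(w t ω - wstar) + μ • g' (w t ω), f' (w t ω)⟫)
        = fun ω => ∑ i, ((w t ω - wstar) + μ • g' (w t ω)) i * f' (w t ω) i :=
      funext fun ω => euclidean_inner_eq_sum _ _
    rw [hsum, hsum']
    rw [integral_finset_sum _ (fun i _ => hprod i),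
      integral_finset_sum _ (fun i _ => hprod' i)]
    refine Finset.sum_congr rfl fun i _ => ?_
    have hcoord : StronglyMeasurable[ℱ t] (fun ω => ((w t ω - wstar) + μ • g' (w t ω)) i) :=
      (EuclideanSpace.proj (𝕜 := ℝ) i).continuous.comp_stronglyMeasurable (hcsmF t)
    have hGiint : Integrable (fun ω => G t ω i) P := (hGiL2 i).integrable one_le_two
    have hpull := condExp_mul_of_stronglyMeasurable_left (m := ℱ t) (μ := P) hcoord (hprod i) hGiint
    calc (∫ ω, ((w t ω - wstar) + μ • g' (w t ω)) i * G t ω i ∂P)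
        = ∫ ω, (P[((fun ω => ((w t ω - wstar) + μ • g' (w t ω)) i) * fun ω => G t ω i) | ℱ t]) ω ∂P :=
          (integral_condExp (ℱ.le t)).symm
      _ = ∫ ω, ((w t ω - wstar) + μ • g' (w t ω)) i * f' (w t ω) i ∂P := by
          refine integral_congr_ae ?_
          filter_upwards [hpull, hGi t i] with ω h1 h2
          exact h1.trans (by rw [Pi.mul_apply, ← h2])
  -- conditional second moment bound integrated.
  have hG2le : ∀ t, (∫ ω, ‖G t ω‖ ^ 2 ∂P) ≤ 2 * Lm * ∫ ω, f (w t ω) ∂P := by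
    intro t
    haveI := hSF t
    have h1 : (∫ ω, ‖G t ω‖ ^ 2 ∂P)
        = ∫ ω, (P[(fun ω => ‖G t ω‖ ^ 2) | ℱ t]) ω ∂P := (integral_condExp (ℱ.le t)).symm
    have h2 : (∫ ω, (P[(fun ω => ‖G t ω‖ ^ 2) | ℱ t]) ω ∂P)
        ≤ ∫ ω, 2 * Lm * f (w t ω) ∂P := by
      refine integral_mono_ae integrable_condExp ((hfint t).const_mul (2 * Lm)) ?_
      have h := hGsq t
      have he : (fun ω => 2 * Lm * f (u t ω)) = fun ω => 2 * Lm * f (w t ω) := by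
        funext ω; rw [(huw t ω).1]
      rwa [he] at h
    have e5 : (∫ ω, 2 * Lm * f (w t ω) ∂P) = 2 * Lm * ∫ ω, f (w t ω) ∂P :=
      integral_const_mul _ _
    rw [h1, ← e5]
    exact h2
  have hΦint : ∀ t, Integrable (fun ω => ‖w t ω - wstar‖ ^ 2 + 2 * μ * g (w t ω)) P :=
    fun t => (hA2int t).add ((hgint t).const_mul (2 * μ))
  -- Per-step contraction of the Lyapunov function Φ = ‖w - w*‖² + 2 μ g(w).
  have key : ∀ t,
      (∫ ω, (‖w (t + 1) ω - wstar‖ ^ 2 + 2 * μ * g (w (t + 1) ω)) ∂P)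
        ≤ (1 - (1 - ε) * μ / (2 * Lm))
          * ∫ ω, (‖w t ω - wstar‖ ^ 2 + 2 * μ * g (w t ω)) ∂P := by
    intro t
    have hdec : ∀ (ω : Ω) (b : EuclideanSpace ℝ (Fin d)),
        ⟪(w t ω - wstar) + μ • g' (w t ω), b⟫
          = ⟪w t ω - wstar, b⟫ + μ * ⟪g' (w t ω), b⟫ :=
      fun ω b => by rw [inner_add_left, real_inner_smul_left]
    have hpw : ∀ ω, ‖w (t + 1) ω - wstar‖ ^ 2 + 2 * μ * g (w (t + 1) ω)
        ≤ (‖w t ω - wstar‖ ^ 2 + 2 * μ * g (w t ω))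
          - 2 * η * ⟪(w t ω - wstar) + μ • g' (w t ω), G t ω⟫
          + 2 * η ^ 2 * ‖G t ω‖ ^ 2 := by
      intro ω
      have hwstep : w (t + 1) ω = w t ω - η • G t ω := by rw [hw t ω, (huw t ω).1]
      have h1 : ‖w (t + 1) ω - wstar‖ ^ 2
          = ‖w t ω - wstar‖ ^ 2 - 2 * (η * ⟪w t ω - wstar, G t ω⟫)
            + η ^ 2 * ‖G t ω‖ ^ 2 := by
        rw [hwstep, sub_right_comm, norm_sub_sq_real, real_inner_smul_right, norm_smul,
          Real.norm_eq_abs, mul_pow, sq_abs]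
      have h2 := hgsm (w (t + 1) ω) (w t ω)
      have he : w (t + 1) ω - w t ω = -(η • G t ω) := by rw [hwstep]; abel
      rw [he, inner_neg_right, real_inner_smul_right, norm_neg, norm_smul,
        Real.norm_eq_abs, mul_pow, sq_abs] at h2
      have h2' : 2 * μ * g (w (t + 1) ω) ≤ 2 * μ * g (w t ω)
          - 2 * μ * (η * ⟪g' (w t ω), G t ω⟫) + η ^ 2 * ‖G t ω‖ ^ 2 := by
        have hm := mul_le_mul_of_nonneg_left h2 (by positivity : (0:ℝ) ≤ 2 * μ)
        have hch : 2 * μ * ((1 / μ) / 2 * (η ^ 2 * ‖G t ω‖ ^ 2)) = η ^ 2 * ‖G t ω‖ ^ 2 := by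
          field_simp
        nlinarith [hm, hch]
      rw [hdec ω (G t ω)]
      linarith [h1, h2']
    have hintG : Integrable (fun ω => ⟪(w t ω - wstar) + μ • g' (w t ω), G t ω⟫) P :=
      integrable_inner_of_memL2 (hcL2 t) (hGL2 t)
    have hintF : Integrable (fun ω => ⟪(w t ω - wstar) + μ • g' (w t ω), f' (w t ω)⟫) P :=
      integrable_inner_of_memL2 (hcL2 t) (hF'L2 t)
    have hRHSint : Integrable (fun ω =>
        (‖w t ω - wstar‖ ^ 2 + 2 * μ * g (w t ω))
          - 2 * η * ⟪(w t ω - wstar) + μ • g' (w t ω), G t ω⟫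
          + 2 * η ^ 2 * ‖G t ω‖ ^ 2) P :=
      ((hΦint t).sub (hintG.const_mul (2 * η))).add ((hGsqint t).const_mul (2 * η ^ 2))
    have step1 : (∫ ω, (‖w (t + 1) ω - wstar‖ ^ 2 + 2 * μ * g (w (t + 1) ω)) ∂P)
        ≤ ∫ ω, ((‖w t ω - wstar‖ ^ 2 + 2 * μ * g (w t ω))
            - 2 * η * ⟪(w t ω - wstar) + μ • g' (w t ω), G t ω⟫
            + 2 * η ^ 2 * ‖G t ω‖ ^ 2) ∂P :=
      integral_mono (hΦint (t + 1)) hRHSint hpw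
    have hsubint : Integrable (fun ω =>
        (‖w t ω - wstar‖ ^ 2 + 2 * μ * g (w t ω))
          - 2 * η * ⟪(w t ω - wstar) + μ • g' (w t ω), G t ω⟫) P :=
      (hΦint t).sub (hintG.const_mul (2 * η))
    have e_add : (∫ ω, ((‖w t ω - wstar‖ ^ 2 + 2 * μ * g (w t ω))
            - 2 * η * ⟪(w t ω - wstar) + μ • g' (w t ω), G t ω⟫
            + 2 * η ^ 2 * ‖G t ω‖ ^ 2) ∂P)
        = (∫ ω, ((‖w t ω - wstar‖ ^ 2 + 2 * μ * g (w t ω))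
            - 2 * η * ⟪(w t ω - wstar) + μ • g' (w t ω), G t ω⟫) ∂P)
          + ∫ ω, 2 * η ^ 2 * ‖G t ω‖ ^ 2 ∂P :=
      integral_add hsubint ((hGsqint t).const_mul (2 * η ^ 2))
    have e_sub : (∫ ω, ((‖w t ω - wstar‖ ^ 2 + 2 * μ * g (w t ω))
            - 2 * η * ⟪(w t ω - wstar) + μ • g' (w t ω), G t ω⟫) ∂P)
        = (∫ ω, (‖w t ω - wstar‖ ^ 2 + 2 * μ * g (w t ω)) ∂P)
          - ∫ ω, 2 * η * ⟪(w t ω - wstar) + μ • g' (w t ω), G t ω⟫ ∂P :=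
      integral_sub (hΦint t) (hintG.const_mul (2 * η))
    have e_m1 : (∫ ω, 2 * η * ⟪(w t ω - wstar) + μ • g' (w t ω), G t ω⟫ ∂P)
        = 2 * η * ∫ ω, ⟪(w t ω - wstar) + μ • g' (w t ω), G t ω⟫ ∂P :=
      integral_const_mul _ _
    have e_m2 : (∫ ω, 2 * η ^ 2 * ‖G t ω‖ ^ 2 ∂P) = 2 * η ^ 2 * ∫ ω, ‖G t ω‖ ^ 2 ∂P :=
      integral_const_mul _ _
    have step2 : (∫ ω, ((‖w t ω - wstar‖ ^ 2 + 2 * μ * g (w t ω))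
            - 2 * η * ⟪(w t ω - wstar) + μ • g' (w t ω), G t ω⟫
            + 2 * η ^ 2 * ‖G t ω‖ ^ 2) ∂P)
        = (∫ ω, (‖w t ω - wstar‖ ^ 2 + 2 * μ * g (w t ω)) ∂P)
          - 2 * η * (∫ ω, ⟪(w t ω - wstar) + μ • g' (w t ω), G t ω⟫ ∂P)
          + 2 * η ^ 2 * ∫ ω, ‖G t ω‖ ^ 2 ∂P := by
      rw [e_add, e_sub, e_m1, e_m2]
    have step3 : (∫ ω, f (w t ω) ∂P) + μ * (1 - ε) * (∫ ω, ‖w t ω - wstar‖ ^ 2 ∂P)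
        ≤ ∫ ω, ⟪(w t ω - wstar) + μ • g' (w t ω), f' (w t ω)⟫ ∂P := by
      have hint1 : Integrable (fun ω => f (w t ω) + μ * (1 - ε) * ‖w t ω - wstar‖ ^ 2) P :=
        (hfint t).add ((hA2int t).const_mul (μ * (1 - ε)))
      have hpt : ∀ ω, f (w t ω) + μ * (1 - ε) * ‖w t ω - wstar‖ ^ 2
          ≤ ⟪(w t ω - wstar) + μ • g' (w t ω), f' (w t ω)⟫ := by
        intro ω
        have hx := hXF (w t ω)
        have hq := hQ (w t ω)
        have hq' := mul_le_mul_of_nonneg_left hq (le_of_lt hμ)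
        rw [hdec ω (f' (w t ω))]
        nlinarith [hx, hq']
      have e3 : (∫ ω, (f (w t ω) + μ * (1 - ε) * ‖w t ω - wstar‖ ^ 2) ∂P)
          = (∫ ω, f (w t ω) ∂P) + ∫ ω, μ * (1 - ε) * ‖w t ω - wstar‖ ^ 2 ∂P :=
        integral_add (hfint t) ((hA2int t).const_mul (μ * (1 - ε)))
      have e4 : (∫ ω, μ * (1 - ε) * ‖w t ω - wstar‖ ^ 2 ∂P)
          = μ * (1 - ε) * ∫ ω, ‖w t ω - wstar‖ ^ 2 ∂P := integral_const_mul _ _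
      calc (∫ ω, f (w t ω) ∂P) + μ * (1 - ε) * (∫ ω, ‖w t ω - wstar‖ ^ 2 ∂P)
          = ∫ ω, (f (w t ω) + μ * (1 - ε) * ‖w t ω - wstar‖ ^ 2) ∂P := by
            rw [e3, e4]
        _ ≤ _ := integral_mono hint1 hintF hpt
    have step4 := hG2le t
    have hfnonnegI : (0:ℝ) ≤ ∫ ω, f (w t ω) ∂P := integral_nonneg fun ω => hfnonneg _
    have hcalc : (∫ ω, (‖w (t + 1) ω - wstar‖ ^ 2 + 2 * μ * g (w (t + 1) ω)) ∂P)
        ≤ (∫ ω, (‖w t ω - wstar‖ ^ 2 + 2 * μ * g (w t ω)) ∂P)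
          - 2 * η * μ * (1 - ε) * ∫ ω, ‖w t ω - wstar‖ ^ 2 ∂P := by
      rw [step2, hinner_eq t] at step1
      have b1 := mul_le_mul_of_nonneg_left step3 (le_of_lt (by positivity : (0:ℝ) < 2 * η))
      have b2 := mul_le_mul_of_nonneg_left step4
        (le_of_lt (by positivity : (0:ℝ) < 2 * η ^ 2))
      have e1 : 4 * Lm * η ^ 2 - 2 * η = 0 := by rw [hηdef]; field_simp; ring
      have e1' : (4 * Lm * η ^ 2 - 2 * η) * (∫ ω, f (w t ω) ∂P) = 0 := by rw [e1]; ring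
      nlinarith [step1, b1, b2, e1']
    have hΦA : (∫ ω, (‖w t ω - wstar‖ ^ 2 + 2 * μ * g (w t ω)) ∂P)
        ≤ 2 * ∫ ω, ‖w t ω - wstar‖ ^ 2 ∂P := by
      have e6 : (∫ ω, 2 * ‖w t ω - wstar‖ ^ 2 ∂P) = 2 * ∫ ω, ‖w t ω - wstar‖ ^ 2 ∂P :=
        integral_const_mul _ _
      rw [← e6]
      refine integral_mono (hΦint t) ((hA2int t).const_mul 2) ?_
      intro ω
      dsimp only
      have h2 := hgub2 (w t ω)
      linarith
    have hcoef : (0:ℝ) ≤ η * μ * (1 - ε) := by positivity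
    have hbig : η * μ * (1 - ε) * (∫ ω, (‖w t ω - wstar‖ ^ 2 + 2 * μ * g (w t ω)) ∂P)
        ≤ 2 * η * μ * (1 - ε) * ∫ ω, ‖w t ω - wstar‖ ^ 2 ∂P := by
      have hm := mul_le_mul_of_nonneg_left hΦA hcoef
      nlinarith [hm]
    have hρeq : 1 - (1 - ε) * μ / (2 * Lm) = 1 - η * μ * (1 - ε) := by rw [hηdef]; ring
    rw [hρeq]
    nlinarith [hcalc, hbig]
  -- iterate the contraction
  have hρ_nonneg : (0:ℝ) ≤ 1 - (1 - ε) * μ / (2 * Lm) := by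
    have h1 : (1 - ε) * μ ≤ Lm := by nlinarith
    have h2 : (1 - ε) * μ / (2 * Lm) ≤ 1 / 2 := by
      rw [div_le_div_iff₀ (by positivity) (by norm_num : (0:ℝ) < 2)]
      nlinarith
    linarith
  have hΦ0 : (∫ ω, (‖w 0 ω - wstar‖ ^ 2 + 2 * μ * g (w 0 ω)) ∂P)
      = ‖w₀ - wstar‖ ^ 2 + 2 * μ * g w₀ := by
    have he : (fun ω : Ω => ‖w 0 ω - wstar‖ ^ 2 + 2 * μ * g (w 0 ω))
        = fun _ => ‖w₀ - wstar‖ ^ 2 + 2 * μ * g w₀ := funext fun ω => by rw [hw0]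
    rw [he, integral_const, probReal_univ, one_smul]
  have hΦbound : ∀ t, (∫ ω, (‖w t ω - wstar‖ ^ 2 + 2 * μ * g (w t ω)) ∂P)
      ≤ (1 - (1 - ε) * μ / (2 * Lm)) ^ t * (‖w₀ - wstar‖ ^ 2 + 2 * μ * g w₀) := by
    intro t
    induction t with
    | zero => rw [pow_zero, one_mul, hΦ0]
    | succ n ih =>
      calc (∫ ω, (‖w (n + 1) ω - wstar‖ ^ 2 + 2 * μ * g (w (n + 1) ω)) ∂P)
          ≤ (1 - (1 - ε) * μ / (2 * Lm))
            * ∫ ω, (‖w n ω - wstar‖ ^ 2 + 2 * μ * g (w n ω)) ∂P := key n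
        _ ≤ (1 - (1 - ε) * μ / (2 * Lm))
            * ((1 - (1 - ε) * μ / (2 * Lm)) ^ n * (‖w₀ - wstar‖ ^ 2 + 2 * μ * g w₀)) :=
            mul_le_mul_of_nonneg_left ih hρ_nonneg
        _ = (1 - (1 - ε) * μ / (2 * Lm)) ^ (n + 1)
            * (‖w₀ - wstar‖ ^ 2 + 2 * μ * g w₀) := by ring
  refine ⟨Lm / 2 * (‖w₀ - wstar‖ ^ 2 + 2 * μ * g w₀), fun t => ?_⟩
  have h1 : (∫ ω, f (w t ω) ∂P)
      ≤ Lm / 2 * ∫ ω, (‖w t ω - wstar‖ ^ 2 + 2 * μ * g (w t ω)) ∂P := by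
    have e7 : (∫ ω, Lm / 2 * (‖w t ω - wstar‖ ^ 2 + 2 * μ * g (w t ω)) ∂P)
        = Lm / 2 * ∫ ω, (‖w t ω - wstar‖ ^ 2 + 2 * μ * g (w t ω)) ∂P :=
      integral_const_mul _ _
    rw [← e7]
    refine integral_mono (hfint t) ((hΦint t).const_mul (Lm / 2)) ?_
    intro ω
    dsimp only
    have h2 := hfub (w t ω)
    have h3 : (0:ℝ) ≤ 2 * μ * g (w t ω) :=
      mul_nonneg (by positivity) (hgnonneg _)
    nlinarith [h2, h3, hL]
  have hrate : 1 - (1 - ε) / (2 * (Lm / μ)) = 1 - (1 - ε) * μ / (2 * Lm) := by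
    have h1 : Lm ≠ 0 := ne_of_gt hL
    have h2 : μ ≠ 0 := ne_of_gt hμ
    field_simp
  rw [hrate]
  calc (∫ ω, f (w t ω) ∂P)
      ≤ Lm / 2 * ∫ ω, (‖w t ω - wstar‖ ^ 2 + 2 * μ * g (w t ω)) ∂P := h1
    _ ≤ Lm / 2 * ((1 - (1 - ε) * μ / (2 * Lm)) ^ t * (‖w₀ - wstar‖ ^ 2 + 2 * μ * g w₀)) :=
        mul_le_mul_of_nonneg_left (hΦbound t) (by positivity)
    _ = Lm / 2 * (‖w₀ - wstar‖ ^ 2 + 2 * μ * g w₀)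
        * (1 - (1 - ε) * μ / (2 * Lm)) ^ t := by ring
end

section
/- Let f : ℝ^d → ℝ be a differentiable convex nonnegative function with f(w*) = 0, let ε > 0, let 0 < μ ≤ L', and let g : ℝ^d → ℝ be a differentiable (1/L')-strongly convex, (1/μ)-smooth function with g ≥ 0, g(w*) = 0, and ⟨∇g(x), ∇f(z)⟩ ≥ (1−ε)⟨x − w*, z − w*⟩ for all x, z ∈ ℝ^d. Let η, α, δ > 0 with α ≤ 1, let v, w ∈ ℝ^d, set u = (αv + w)/(1+α), and let G be a random vector with E[G] = ∇f(u) and E[‖G‖²] ≤ 2L' f(u). Define w⁺ = u − ηG and v⁺ = (1−α)v + αu − δG. Then E[g(v⁺) + (δ(1−ε)/(2α))‖w⁺ − w*‖²] ≤ (1−α) g(v) + (1−α)(δ(1−ε)/(2α))‖w − w*‖² + (1/2)(α/μ − δ(1−ε))‖u − w*‖² + ((δ/α)(1−ε)(η²L' − η) + δ²L'/μ) f(u). -/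
open MeasureTheory RealInnerProductSpace

open Filter Topology in
theorem convex_grad_ineq {E : Type*} [NormedAddCommGroup E] [InnerProductSpace ℝ E] [CompleteSpace E]
    {f : E → ℝ} {f' : E → E} (hconv : ConvexOn ℝ Set.univ f)
    (hdiff : ∀ x, HasGradientAt f (f' x) x) (x z : E) :
    f z + ⟪f' z, x - z⟫ ≤ f x := by
  have hline : HasDerivAt (fun t : ℝ => z + t • (x - z)) (x - z) 0 := by
    simpa using ((hasDerivAt_id (0 : ℝ)).smul_const (x - z)).const_add z
  have hphi : HasDerivAt (fun t : ℝ => f (z + t • (x - z))) ⟪f' z, x - z⟫ 0 := by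
    have h1 : HasFDerivAt f (InnerProductSpace.toDual ℝ E (f' z)) (z + (0:ℝ) • (x - z)) := by
      simpa using (hasGradientAt_iff_hasFDerivAt.mp (hdiff z))
    have h2 := h1.comp_hasDerivAt 0 hline
    simp at h2
    exact h2
  have hslope : Tendsto (slope (fun t : ℝ => f (z + t • (x - z))) 0) (𝓝[>] 0)
      (𝓝 ⟪f' z, x - z⟫) :=
    (hasDerivAt_iff_tendsto_slope.mp hphi).mono_left
      (nhdsWithin_mono _ (fun t ht => ne_of_gt ht))
  have hev : ∀ᶠ t in 𝓝[>] (0:ℝ),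
      slope (fun t : ℝ => f (z + t • (x - z))) 0 t ≤ f x - f z := by
    filter_upwards [Ioc_mem_nhdsGT (by norm_num : (0:ℝ) < 1)] with t ht
    have hcv := hconv.2 (Set.mem_univ z) (Set.mem_univ x)
      (by linarith [ht.2] : (0:ℝ) ≤ 1 - t) (le_of_lt ht.1) (by ring)
    have he : (1 - t) • z + t • x = z + t • (x - z) := by module
    rw [he] at hcv
    rw [slope_def_field]
    simp only [smul_eq_mul] at hcv
    simp only [zero_smul, add_zero, sub_zero]
    rw [div_le_iff₀ ht.1]
    nlinarith [hcv]
  exact by linarith [le_of_tendsto hslope hev]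

set_option maxHeartbeats 1000000 in
/-- One-step estimate for MaSS on general convex losses in the interpolation setting.
With `u = (αv + w)/(1+α)`, `w⁺ = u − ηG`, `v⁺ = (1−α)v + αu − δG`, where `G` is an unbiased
stochastic gradient at `u` with `E[‖G‖²] ≤ 2L'f(u)`:
`E[g(v⁺) + (δ(1−ε)/(2α))‖w⁺ − w*‖²] ≤ (1−α)g(v) + (1−α)(δ(1−ε)/(2α))‖w − w*‖²
  + (1/2)(α/μ − δ(1−ε))‖u − w*‖² + ((δ/α)(1−ε)(η²L' − η) + δ²L'/μ) f(u)`. -/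
theorem mass_convex_one_step
    (d : ℕ)
    (f g : EuclideanSpace ℝ (Fin d) → ℝ)
    (f' g' : EuclideanSpace ℝ (Fin d) → EuclideanSpace ℝ (Fin d))
    (hf' : ∀ x, HasGradientAt f (f' x) x)
    (hg' : ∀ x, HasGradientAt g (g' x) x)
    (hfconv : ConvexOn ℝ Set.univ f)
    (hfnonneg : ∀ x, 0 ≤ f x)
    (wstar : EuclideanSpace ℝ (Fin d)) (hfws : f wstar = 0)
    (ε : ℝ) (hε : 0 < ε)
    (μ L' : ℝ) (hμ : 0 < μ) (hμL : μ ≤ L')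
    (hgsc : ∀ x z, g z + ⟪g' z, x - z⟫ + (1 / L') / 2 * ‖x - z‖ ^ 2 ≤ g x)
    (hgsm : ∀ x z, g x ≤ g z + ⟪g' z, x - z⟫ + (1 / μ) / 2 * ‖x - z‖ ^ 2)
    (hgnonneg : ∀ x, 0 ≤ g x) (hgws : g wstar = 0)
    (hcorr : ∀ x z, (1 - ε) * ⟪x - wstar, z - wstar⟫ ≤ ⟪g' x, f' z⟫)
    (η α δ : ℝ) (hη : 0 < η) (hα : 0 < α) (hα1 : α ≤ 1) (hδ : 0 < δ)
    (v w u : EuclideanSpace ℝ (Fin d)) (hu : u = (1 / (1 + α)) • (α • v + w))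
    (Ω : Type) [MeasurableSpace Ω] (P : Measure Ω) [IsProbabilityMeasure P]
    (G : Ω → EuclideanSpace ℝ (Fin d))
    (hGint : Integrable G P)
    (hGsqint : Integrable (fun ω => ‖G ω‖ ^ 2) P)
    (hGmean : (∫ ω, G ω ∂P) = f' u)
    (hGsq : (∫ ω, ‖G ω‖ ^ 2 ∂P) ≤ 2 * L' * f u) :
    (∫ ω, (g ((1 - α) • v + α • u - δ • G ω)
        + (δ * (1 - ε) / (2 * α)) * ‖(u - η • G ω) - wstar‖ ^ 2) ∂P)
      ≤ (1 - α) * g v + (1 - α) * (δ * (1 - ε) / (2 * α)) * ‖w - wstar‖ ^ 2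
        + (1 / 2) * (α / μ - δ * (1 - ε)) * ‖u - wstar‖ ^ 2
        + ((δ / α) * (1 - ε) * (η ^ 2 * L' - η) + δ ^ 2 * L' / μ) * f u := by
  have hL' : 0 < L' := lt_of_lt_of_le hμ hμL
  have hfgrad : ∀ x z, f z + ⟪f' z, x - z⟫ ≤ f x := convex_grad_ineq hfconv hf'
  by_cases hεc : ε ≤ 1
  · -- main case
    have h1e : (0:ℝ) ≤ 1 - ε := by linarith
    set p : EuclideanSpace ℝ (Fin d) := (1 - α) • v + α • u with hp
    -- basic facts
    have hcf : f u ≤ ⟪f' u, u - wstar⟫ := by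
      have h3 := hfgrad wstar u
      have e3 : ⟪f' u, wstar - u⟫ = -⟪f' u, u - wstar⟫ := by
        rw [← inner_neg_right]; congr 1; abel
      rw [hfws, e3] at h3; linarith
    have hgw0 : g' wstar = 0 := by
      have h := hgsm (wstar - μ • g' wstar) wstar
      have e1 : wstar - μ • g' wstar - wstar = -(μ • g' wstar) := by abel
      rw [e1, inner_neg_right, real_inner_smul_right, real_inner_self_eq_norm_sq, hgws,
        norm_neg, norm_smul, Real.norm_eq_abs, abs_of_pos hμ] at h
      have e2 : (1/μ)/2 * (μ * ‖g' wstar‖)^2 = μ/2 * ‖g' wstar‖^2 := by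
        field_simp
      rw [e2] at h
      have h0 := hgnonneg (wstar - μ • g' wstar)
      have h2' : ‖g' wstar‖^2 ≤ 0 := by
        have hmm : μ/2 * ‖g' wstar‖^2 ≤ μ/2 * 0 := by linarith
        exact le_of_mul_le_mul_left hmm (by positivity)
      exact norm_eq_zero.mp (sq_eq_zero_iff.mp (le_antisymm h2' (sq_nonneg _)))
    have hGu : g u ≤ (1/μ)/2 * ‖u - wstar‖^2 := by
      have h := hgsm u wstar
      rw [hgws, hgw0, inner_zero_left] at h; linarith
    have hGp : g p ≤ (1-α) * g v + α * g u := by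
      have l1 := hgsc v p
      have l2 := hgsc u p
      have hq1 : (0:ℝ) ≤ (1/L')/2 * ‖v - p‖^2 :=
        mul_nonneg (div_nonneg (one_div_nonneg.mpr hL'.le) (by norm_num)) (sq_nonneg _)
      have hq2 : (0:ℝ) ≤ (1/L')/2 * ‖u - p‖^2 :=
        mul_nonneg (div_nonneg (one_div_nonneg.mpr hL'.le) (by norm_num)) (sq_nonneg _)
      have hzero : (1-α) * ⟪g' p, v - p⟫ + α * ⟪g' p, u - p⟫ = 0 := by
        rw [← real_inner_smul_right, ← real_inner_smul_right, ← inner_add_right]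
        have hz : (1-α) • (v - p) + α • (u - p) = (0 : EuclideanSpace ℝ (Fin d)) := by
          rw [hp]; module
        rw [hz, inner_zero_right]
      have m1 := mul_le_mul_of_nonneg_left
        (show g p + ⟪g' p, v - p⟫ ≤ g v by linarith) (by linarith : (0:ℝ) ≤ 1 - α)
      have m2 := mul_le_mul_of_nonneg_left
        (show g p + ⟪g' p, u - p⟫ ≤ g u by linarith) hα.le
      linarith [m1, m2, hzero]
    -- vector identity
    have h1a : (1:ℝ) + α ≠ 0 := ne_of_gt (by linarith)
    have hca : (1 + α) * (1/(1+α)) = 1 := by field_simp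
    have hv' : (1 + α) • u = α • v + w := by
      rw [hu, smul_smul, hca, one_smul]
    have hw' : w = (1 + α) • u - α • v := by
      rw [eq_sub_iff_add_eq, hv']; abel
    have hvec : α • (p - wstar) = (u - wstar) - (1-α) • (w - wstar) := by
      rw [hp, hw']; module
    have hscal : α * ⟪p - wstar, u - wstar⟫
        = ‖u - wstar‖^2 - (1-α) * ⟪w - wstar, u - wstar⟫ := by
      rw [← real_inner_smul_left, hvec, inner_sub_left, real_inner_smul_left,
        real_inner_self_eq_norm_sq]
    have hsc : ∀ a b c : ℝ, α * a = b - (1-α)*c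
        → a = 2*(b/(2*α)) - 2*(c/(2*α)) + c := by
      intro a b c h
      field_simp
      linarith
    have hip2 : ⟪p - wstar, u - wstar⟫
        = 2*(‖u - wstar‖^2/(2*α)) - 2*(⟪w - wstar, u - wstar⟫/(2*α))
          + ⟪w - wstar, u - wstar⟫ := hsc _ _ _ hscal
    -- integral machinery
    have hgcont : Continuous g := continuous_iff_continuousAt.mpr fun x => (hg' x).continuousAt
    have hGm : AEStronglyMeasurable G P := hGint.aestronglyMeasurable
    have hAm : AEStronglyMeasurable (fun ω => g (p - δ • G ω)) P :=
      hgcont.comp_aestronglyMeasurable (aestronglyMeasurable_const.sub (hGm.const_smul δ))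
    have i1 : Integrable (fun ω => δ * ⟪g' p, G ω⟫) P :=
      (hGint.const_inner (g' p)).const_mul δ
    have i2 : Integrable (fun ω => g p - δ * ⟪g' p, G ω⟫) P :=
      (integrable_const (g p)).sub i1
    have i3 : Integrable (fun ω => (1/μ)/2*δ^2 * ‖G ω‖^2) P := hGsqint.const_mul _
    have hbndint : Integrable
        (fun ω => g p - δ * ⟪g' p, G ω⟫ + (1/μ)/2*δ^2 * ‖G ω‖^2) P := i2.add i3
    have hA_le : ∀ ω, g (p - δ • G ω)
        ≤ g p - δ * ⟪g' p, G ω⟫ + (1/μ)/2*δ^2 * ‖G ω‖^2 := by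
      intro ω
      have h := hgsm (p - δ • G ω) p
      have e1 : p - δ • G ω - p = -(δ • G ω) := by abel
      rw [e1, inner_neg_right, real_inner_smul_right, norm_neg, norm_smul,
        Real.norm_eq_abs] at h
      have e2 : (1/μ)/2 * (|δ| * ‖G ω‖)^2 = (1/μ)/2*δ^2 * ‖G ω‖^2 := by
        rw [mul_pow, sq_abs]; ring
      rw [e2] at h
      linarith
    have hAint : Integrable (fun ω => g (p - δ • G ω)) P :=
      hbndint.mono' hAm (Filter.Eventually.of_forall fun ω => by
        rw [Real.norm_eq_abs, abs_of_nonneg (hgnonneg _)]; exact hA_le ω)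
    have hBexp : ∀ ω : Ω, (δ * (1 - ε) / (2 * α)) * ‖(u - η • G ω) - wstar‖^2
        = (δ * (1 - ε) / (2 * α)) * ‖u - wstar‖^2
          - 2*(δ * (1 - ε) / (2 * α))*η*⟪u - wstar, G ω⟫
          + (δ * (1 - ε) / (2 * α))*η^2*‖G ω‖^2 := by
      intro ω
      have e1 : (u - η • G ω) - wstar = (u - wstar) - η • G ω := by abel
      rw [e1, norm_sub_sq_real, real_inner_smul_right, norm_smul, Real.norm_eq_abs,
        mul_pow, sq_abs]
      ring
    have j1 : Integrable (fun ω => 2*(δ * (1 - ε) / (2 * α))*η*⟪u - wstar, G ω⟫) P :=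
      (hGint.const_inner (u - wstar)).const_mul _
    have j2 : Integrable (fun ω => (δ * (1 - ε) / (2 * α)) * ‖u - wstar‖^2
        - 2*(δ * (1 - ε) / (2 * α))*η*⟪u - wstar, G ω⟫) P :=
      (integrable_const _).sub j1
    have j3 : Integrable (fun ω => (δ * (1 - ε) / (2 * α))*η^2*‖G ω‖^2) P :=
      hGsqint.const_mul _
    have hBint : Integrable
        (fun ω => (δ * (1 - ε) / (2 * α)) * ‖(u - η • G ω) - wstar‖^2) P := by
      exact (j2.add j3).congr (Filter.Eventually.of_forall fun ω => (hBexp ω).symm)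
    rw [integral_add hAint hBint]
    have hIA : ∫ ω, g (p - δ • G ω) ∂P
        ≤ g p - δ * ⟪g' p, f' u⟫ + (1/μ)/2*δ^2 * (∫ ω, ‖G ω‖^2 ∂P) := by
      have h1 := integral_mono hAint hbndint hA_le
      have h2 : ∫ ω, (g p - δ * ⟪g' p, G ω⟫ + (1/μ)/2*δ^2 * ‖G ω‖^2) ∂P
          = g p - δ * ⟪g' p, f' u⟫ + (1/μ)/2*δ^2 * (∫ ω, ‖G ω‖^2 ∂P) := by
        rw [integral_add i2 i3, integral_sub (integrable_const _) i1,
          integral_const, integral_const_mul, integral_const_mul, integral_inner hGint,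
          hGmean]
        simp
      linarith [h1, h2.le, h2.ge]
    have hIB : ∫ ω, (δ * (1 - ε) / (2 * α)) * ‖(u - η • G ω) - wstar‖^2 ∂P
        = (δ * (1 - ε) / (2 * α)) * ‖u - wstar‖^2
          - 2*(δ * (1 - ε) / (2 * α))*η*⟪u - wstar, f' u⟫
          + (δ * (1 - ε) / (2 * α))*η^2*(∫ ω, ‖G ω‖^2 ∂P) := by
      rw [integral_congr_ae (Filter.Eventually.of_forall hBexp)]
      rw [integral_add j2 j3, integral_sub (integrable_const _) j1,
        integral_const, integral_const_mul, integral_const_mul, integral_inner hGint,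
        hGmean]
      simp
    rw [hIB]
    have hcomm : ⟪u - wstar, f' u⟫ = ⟪f' u, u - wstar⟫ := real_inner_comm _ _
    rw [hcomm]
    -- now a purely scalar estimate
    have hb1' : δ*(1-ε)*(2*(‖u - wstar‖^2/(2*α)) - 2*(⟪w - wstar, u - wstar⟫/(2*α))
        + ⟪w - wstar, u - wstar⟫) ≤ δ * ⟪g' p, f' u⟫ := by
      rw [← hip2]
      have h := mul_le_mul_of_nonneg_left (hcorr p u) hδ.le
      linarith [h]
    have hb2 : 2*(δ*(1-ε)/(2*α))*η*(f u) ≤ 2*(δ*(1-ε)/(2*α))*η*⟪f' u, u - wstar⟫ :=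
      mul_le_mul_of_nonneg_left hcf
        (mul_nonneg (mul_nonneg (by norm_num)
          (div_nonneg (mul_nonneg hδ.le h1e) (by linarith))) hη.le)
    have hqS : ((1/μ)/2*δ^2 + (δ * (1 - ε) / (2 * α))*η^2) * (∫ ω, ‖G ω‖^2 ∂P)
        ≤ ((1/μ)/2*δ^2 + (δ * (1 - ε) / (2 * α))*η^2) * (2 * L' * f u) :=
      mul_le_mul_of_nonneg_left hGsq
        (add_nonneg (mul_nonneg (div_nonneg (one_div_nonneg.mpr hμ.le) (by norm_num))
            (sq_nonneg δ))
          (mul_nonneg (div_nonneg (mul_nonneg hδ.le h1e) (by linarith)) (sq_nonneg η)))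
    have hb5 := mul_le_mul_of_nonneg_left hGu hα.le
    have hsq : (0:ℝ) ≤ ‖w - wstar‖^2 - 2*⟪w - wstar, u - wstar⟫ + ‖u - wstar‖^2 := by
      rw [← norm_sub_sq_real]; positivity
    have key : (0:ℝ) ≤ δ*(1-ε)*(1-α)/(2*α)
        * (‖w - wstar‖^2 - 2*⟪w - wstar, u - wstar⟫ + ‖u - wstar‖^2) :=
      mul_nonneg (div_nonneg (mul_nonneg (mul_nonneg hδ.le h1e) (by linarith))
        (by linarith)) hsq
    have keyeq : δ*(1-ε)*(1-α)/(2*α)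
          * (‖w - wstar‖^2 - 2*⟪w - wstar, u - wstar⟫ + ‖u - wstar‖^2)
        = δ*(1-ε)/(2*α) * (‖w - wstar‖^2 - 2*⟪w - wstar, u - wstar⟫ + ‖u - wstar‖^2)
          - δ*(1-ε)/2 * (‖w - wstar‖^2 - 2*⟪w - wstar, u - wstar⟫ + ‖u - wstar‖^2) := by
      field_simp
    have hWeq : (1-α) * (δ*(1-ε)/(2*α)) * ‖w - wstar‖^2
        = δ*(1-ε)/(2*α)*‖w - wstar‖^2 - δ*(1-ε)/2*‖w - wstar‖^2 := by
      field_simp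
    have hαne : α ≠ 0 := ne_of_gt hα
    have hFeq : (δ/α)*(1-ε)*(η^2*L'-η)*(f u)
        = 2*(δ*(1-ε)/(2*α))*η^2*L'*(f u) - 2*(δ*(1-ε)/(2*α))*η*(f u) := by
      field_simp
    have hmain : (∫ ω, g (p - δ • G ω) ∂P) + (δ*(1-ε)/(2*α))*‖u - wstar‖^2 - 2*(δ*(1-ε)/(2*α))*η*⟪f' u, u - wstar⟫ + (δ*(1-ε)/(2*α))*η^2*(∫ ω, ‖G ω‖^2 ∂P)
        ≤ (1-α)*(g v) + (1-α)*(δ*(1-ε)/(2*α))*‖w - wstar‖^2 + 1/2*(α/μ - δ*(1-ε))*‖u - wstar‖^2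
        + ((δ/α)*(1-ε)*(η^2*L'-η) + δ^2*L'/μ)*(f u) := by
      calc (∫ ω, g (p - δ • G ω) ∂P) + (δ*(1-ε)/(2*α))*‖u - wstar‖^2 - 2*(δ*(1-ε)/(2*α))*η*⟪f' u, u - wstar⟫ + (δ*(1-ε)/(2*α))*η^2*(∫ ω, ‖G ω‖^2 ∂P)
          ≤ ((∫ ω, g (p - δ • G ω) ∂P) + (δ*(1-ε)/(2*α))*‖u - wstar‖^2 - 2*(δ*(1-ε)/(2*α))*η*⟪f' u, u - wstar⟫ + (δ*(1-ε)/(2*α))*η^2*(∫ ω, ‖G ω‖^2 ∂P))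
        + ( ((g p - δ*⟪g' p, f' u⟫ + 1/μ/2*δ^2*(∫ ω, ‖G ω‖^2 ∂P)) - (∫ ω, g (p - δ • G ω) ∂P))
          + (((1-α)*(g v) + α*(g u)) - g p)
          + (α*(1/μ/2*‖u - wstar‖^2) - α*(g u))
          + (δ*⟪g' p, f' u⟫ - δ*(1-ε)*(2*(‖u - wstar‖^2/(2*α)) - 2*(⟪w - wstar, u - wstar⟫/(2*α)) + ⟪w - wstar, u - wstar⟫))
          + (2*(δ*(1-ε)/(2*α))*η*⟪f' u, u - wstar⟫ - 2*(δ*(1-ε)/(2*α))*η*(f u))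
          + ((1/μ/2*δ^2 + δ*(1-ε)/(2*α)*η^2)*(2*L'*(f u))
              - (1/μ/2*δ^2 + δ*(1-ε)/(2*α)*η^2)*(∫ ω, ‖G ω‖^2 ∂P))
          + (δ*(1-ε)*(1-α)/(2*α)*(‖w - wstar‖^2-2*⟪w - wstar, u - wstar⟫+‖u - wstar‖^2)) ) := by
            linarith [hIA, hGp, hb5, hb1', hb2, hqS, key]
        _ = (1-α)*(g v) + (1-α)*(δ*(1-ε)/(2*α))*‖w - wstar‖^2 + 1/2*(α/μ - δ*(1-ε))*‖u - wstar‖^2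
        + ((δ/α)*(1-ε)*(η^2*L'-η) + δ^2*L'/μ)*(f u) := by
            linear_combination keyeq - hWeq - hFeq
    linarith [hmain]
  · -- degenerate case : ε > 1 forces everything to collapse to wstar
    push_neg at hεc
    have hf0 : ∀ z, f' z = 0 := by
      intro z
      have h1 := hgsc wstar (wstar - f' z)
      have e1 : wstar - (wstar - f' z) = f' z := by abel
      rw [e1, hgws] at h1
      have h2 := hcorr (wstar - f' z) z
      have e2 : wstar - f' z - wstar = -(f' z) := by abel
      rw [e2, inner_neg_left] at h2
      have h3 := hfgrad wstar z
      have e3 : ⟪f' z, wstar - z⟫ = -⟪f' z, z - wstar⟫ := by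
        rw [← inner_neg_right]; congr 1; abel
      rw [hfws, e3] at h3
      have hg0 := hgnonneg (wstar - f' z)
      have hfz := hfnonneg z
      have hprod : (0:ℝ) ≤ (ε - 1) * ⟪f' z, z - wstar⟫ :=
        mul_nonneg (by linarith) (by linarith)
      have hLq : (0:ℝ) < (1/L')/2 := by positivity
      have hq : (1/L')/2 * ‖f' z‖^2 ≤ (1/L')/2 * 0 := by linarith
      have h2' : ‖f' z‖^2 ≤ 0 := le_of_mul_le_mul_left hq hLq
      exact norm_eq_zero.mp (sq_eq_zero_iff.mp (le_antisymm h2' (sq_nonneg _)))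
    have hzero : ∀ z : EuclideanSpace ℝ (Fin d), z = wstar := by
      intro z0
      have h4 := hcorr (wstar - (z0 - wstar)) z0
      rw [hf0 z0, inner_zero_right] at h4
      have e4 : wstar - (z0 - wstar) - wstar = -(z0 - wstar) := by abel
      rw [e4, inner_neg_left, real_inner_self_eq_norm_sq] at h4
      have h2' : ‖z0 - wstar‖^2 ≤ 0 := by nlinarith [h4, hεc]
      have := norm_eq_zero.mp (sq_eq_zero_iff.mp (le_antisymm h2' (sq_nonneg _)))
      exact sub_eq_zero.mp this
    have hze : ∀ x : EuclideanSpace ℝ (Fin d), x = 0 :=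
      fun x => (hzero x).trans (hzero 0).symm
    rw [hze wstar] at hfws hgws
    rw [hze u, hze v, hze w, hze wstar,
      show G = fun _ => (0 : EuclideanSpace ℝ (Fin d)) from funext fun ω => hze (G ω)]
    simp only [smul_zero, add_zero, zero_add, sub_zero, sub_self, norm_zero, hgws, hfws,
      mul_zero, zero_mul]
    norm_num
end

section
/- Let x̃₁, …, x̃_m be i.i.d. random vectors in ℝ^d with E[x̃₁ x̃₁ᵀ] = H, where H is symmetric positive definite, and suppose E[(x̃₁ᵀ H⁻¹ x̃₁) · x̃₁ x̃₁ᵀ] ⪯ κ̃ H for a constant κ̃ > 0. Define the mini-batch matrix H̃_m = (1/m) Σ_{i=1}^m x̃ᵢ x̃ᵢᵀ. Then E[H̃_m H⁻¹ H̃_m] − H ⪯ (1/m)(κ̃ − 1) H; equivalently E[H̃_m H⁻¹ H̃_m] ⪯ (κ̃/m + (m−1)/m) H. -/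
open MeasureTheory ProbabilityTheory Matrix
open scoped ENNReal

lemma aux_memLp_mul {Ω : Type*} [MeasurableSpace Ω] {P : Measure Ω} {f g : Ω → ℝ}
    {p q r : ℝ≥0∞} (hpqr : 1/p = 1/q + 1/r) (hf : MemLp f q P) (hg : MemLp g r P) :
    MemLp (fun ω => f ω * g ω) p P := by
  refine ⟨hf.1.mul hg.1, ?_⟩
  calc eLpNorm (fun ω => f ω * g ω) p P ≤ eLpNorm f q P * eLpNorm g r P := by
        haveI : ENNReal.HolderTriple q r p := ⟨by simpa only [one_div] using hpqr.symm⟩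
        simpa using eLpNorm_le_eLpNorm_mul_eLpNorm'_of_norm hf.1 hg.1 (· * ·) 1
          (Filter.Eventually.of_forall fun ω => by simp [norm_mul])
    _ < ⊤ := ENNReal.mul_lt_top hf.2 hg.2

lemma aux_psd_smul_sum {n N : Type*} [Fintype n] [Fintype N] {c : ℝ} (hc : 0 ≤ c)
    {A : N → Matrix n n ℝ} (hA : ∀ i, (A i).PosSemidef) :
    (c • ∑ i, A i).PosSemidef := by
  rw [Matrix.posSemidef_iff_dotProduct_mulVec]
  constructor
  · have h : ∀ i, (A i)ᴴ = A i := fun i => (hA i).1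
    simp only [Matrix.IsHermitian, Matrix.conjTranspose_smul, Matrix.conjTranspose_sum,
      star_trivial]
    exact congrArg _ (Finset.sum_congr rfl fun i _ => h i)
  · intro v
    have h1 : (c • ∑ i, A i) *ᵥ v = c • ∑ i, (A i) *ᵥ v := by
      rw [Matrix.smul_mulVec]
      congr 1
      ext k
      simp [Matrix.mulVec, dotProduct, Finset.sum_apply, Matrix.sum_apply, Finset.sum_mul]
      rw [Finset.sum_comm]
    rw [h1, dotProduct_smul]
    have h2 : star v ⬝ᵥ ∑ i, A i *ᵥ v = ∑ i, star v ⬝ᵥ (A i *ᵥ v) := by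
      simp only [dotProduct, Finset.sum_apply, Finset.mul_sum]
      rw [Finset.sum_comm]
    rw [h2, smul_eq_mul]
    exact mul_nonneg hc (Finset.sum_nonneg fun i _ => (hA i).dotProduct_mulVec_nonneg v)


/-- Mini-batch statistical condition number bound (Lemma 4): if `x̃₁, …, x̃_m` are i.i.d.
random vectors with `E[x̃x̃ᵀ] = H` and `E[(x̃ᵀH⁻¹x̃) x̃x̃ᵀ] ⪯ κ̃H`, then the mini-batch matrix
`H̃_m = (1/m)Σᵢ x̃ᵢx̃ᵢᵀ` satisfies `E[H̃_m H⁻¹ H̃_m] − H ⪯ ((κ̃ − 1)/m) H`, equivalently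
`E[H̃_m H⁻¹ H̃_m] ⪯ (κ̃/m + (m−1)/m) H`. -/
theorem minibatch_statistical_condition_number
    (d m : ℕ) (hm : 0 < m)
    (Ω : Type) [MeasurableSpace Ω] (P : Measure Ω) [IsProbabilityMeasure P]
    (x : Fin m → Ω → Fin d → ℝ)
    (hmeas : ∀ i, Measurable (x i))
    (hindep : iIndepFun x P)
    (hident : ∀ i j, Measure.map (x i) P = Measure.map (x j) P)
    (hmom : ∀ i k, MemLp (fun ω => x i ω k) 4 P)
    (H : Matrix (Fin d) (Fin d) ℝ) (hH : H.PosDef)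
    (hcov : ∀ i, (Matrix.of fun k l => ∫ ω, x i ω k * x i ω l ∂P) = H)
    (κt : ℝ) (hκt : 0 < κt)
    (hstat : ∀ i,
      (κt • H - Matrix.of fun k l =>
          ∫ ω, (x i ω ⬝ᵥ H⁻¹.mulVec (x i ω)) * (x i ω k * x i ω l) ∂P).PosSemidef) :
    (((κt - 1) / (m : ℝ)) • H -
        ((Matrix.of fun k l =>
            ∫ ω, (((1 / (m : ℝ)) • ∑ i, Matrix.vecMulVec (x i ω) (x i ω)) * H⁻¹ *
                ((1 / (m : ℝ)) • ∑ i, Matrix.vecMulVec (x i ω) (x i ω))) k l ∂P) - H)).PosSemidef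
      ∧
    ((κt / (m : ℝ) + ((m : ℝ) - 1) / (m : ℝ)) • H -
        (Matrix.of fun k l =>
            ∫ ω, (((1 / (m : ℝ)) • ∑ i, Matrix.vecMulVec (x i ω) (x i ω)) * H⁻¹ *
                ((1 / (m : ℝ)) • ∑ i, Matrix.vecMulVec (x i ω) (x i ω))) k l ∂P)).PosSemidef := by
  have hm' : (m : ℝ) ≠ 0 := Nat.cast_ne_zero.2 hm.ne'
  -- basic integrability
  have half : (1:ℝ≥0∞)/2 = 1/4 + 1/4 := by
    rw [ENNReal.div_add_div_same, ENNReal.div_eq_div_iff] <;> norm_num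
  have one : (1:ℝ≥0∞)/1 = 1/2 + 1/2 := by
    rw [show (1:ℝ≥0∞)/1 = 1 by simp, ENNReal.div_add_div_same]
    norm_num
    exact (ENNReal.div_self two_ne_zero ENNReal.ofNat_ne_top).symm
  have hmul2 : ∀ (i j : Fin m) (a b : Fin d), MemLp (fun ω => x i ω a * x j ω b) 2 P :=
    fun i j a b => aux_memLp_mul half (hmom i a) (hmom j b)
  have hint2 : ∀ (i j : Fin m) (a b : Fin d), Integrable (fun ω => x i ω a * x j ω b) P :=
    fun i j a b => (hmul2 i j a b).integrable one_le_two
  have hint4 : ∀ (i j : Fin m) (a k l b : Fin d),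
      Integrable (fun ω => (x i ω a * x i ω k) * (x j ω l * x j ω b)) P :=
    fun i j a k l b => (aux_memLp_mul one (hmul2 i i a k) (hmul2 j j l b)).integrable le_rfl
  -- pointwise expansion of matrix entries
  have hptw : ∀ (i j : Fin m) (ω : Ω) (a b : Fin d),
      (vecMulVec (x i ω) (x i ω) * H⁻¹ * vecMulVec (x j ω) (x j ω)) a b
        = ∑ k, ∑ l, H⁻¹ k l * ((x i ω a * x i ω k) * (x j ω l * x j ω b)) := by
    intro i j ω a b
    simp only [Matrix.mul_apply, vecMulVec_apply, Finset.sum_mul]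
    rw [Finset.sum_comm]
    exact Finset.sum_congr rfl fun k _ => Finset.sum_congr rfl fun l _ => by ring
  have hint_entry : ∀ (i j : Fin m) (a b : Fin d),
      Integrable (fun ω =>
        (vecMulVec (x i ω) (x i ω) * H⁻¹ * vecMulVec (x j ω) (x j ω)) a b) P := by
    intro i j a b
    simp only [hptw]
    exact integrable_finset_sum _ fun k _ => integrable_finset_sum _ fun l _ =>
      (hint4 i j a k l b).const_mul _
  -- the per-pair expectation matrices
  set M : Fin m → Fin m → Matrix (Fin d) (Fin d) ℝ := fun i j => Matrix.of fun a b =>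
    ∫ ω, (vecMulVec (x i ω) (x i ω) * H⁻¹ * vecMulVec (x j ω) (x j ω)) a b ∂P with hM
  set D : Fin m → Matrix (Fin d) (Fin d) ℝ := fun i => Matrix.of fun a b =>
    ∫ ω, (x i ω ⬝ᵥ H⁻¹.mulVec (x i ω)) * (x i ω a * x i ω b) ∂P with hD
  have hE : (Matrix.of fun a b =>
      ∫ ω, (((1 / (m : ℝ)) • ∑ i, Matrix.vecMulVec (x i ω) (x i ω)) * H⁻¹ *
          ((1 / (m : ℝ)) • ∑ i, Matrix.vecMulVec (x i ω) (x i ω))) a b ∂P)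
      = ((1:ℝ)/(m:ℝ)^2) • ∑ i, ∑ j, M i j := by
    ext a b
    have hS : ∀ ω : Ω, (((1 / (m : ℝ)) • ∑ i, Matrix.vecMulVec (x i ω) (x i ω)) * H⁻¹ *
        ((1 / (m : ℝ)) • ∑ i, Matrix.vecMulVec (x i ω) (x i ω)))
        = ((1:ℝ)/(m:ℝ)^2) •
            ∑ i, ∑ j, vecMulVec (x i ω) (x i ω) * H⁻¹ * vecMulVec (x j ω) (x j ω) := by
      intro ω
      rw [Matrix.smul_mul, Matrix.smul_mul, Matrix.mul_smul, smul_smul]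
      congr 1
      · rw [div_mul_div_comm, one_mul, sq]
      · rw [Finset.sum_mul, Finset.sum_mul]
        exact Finset.sum_congr rfl fun i _ => Finset.mul_sum _ _ _
    show (∫ ω, _ ∂P) = _
    simp only [hS, Matrix.smul_apply, Matrix.sum_apply, smul_eq_mul]
    rw [integral_const_mul, integral_finset_sum _
      (fun i _ => integrable_finset_sum _ fun j _ => hint_entry i j a b)]
    simp only [Matrix.smul_apply, Matrix.sum_apply, smul_eq_mul, hM, Matrix.of_apply]
    congr 1
    exact Finset.sum_congr rfl fun i _ =>
      integral_finset_sum _ fun j _ => hint_entry i j a b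
  have hoff : ∀ i j, i ≠ j → M i j = H := by
    intro i j hij
    have hIJ : ∀ a k l b : Fin d,
        ∫ ω, (x i ω a * x i ω k) * (x j ω l * x j ω b) ∂P = H a k * H l b := by
      intro a k l b
      have hind : IndepFun (fun ω => x i ω a * x i ω k) (fun ω => x j ω l * x j ω b) P :=
        (hindep.indepFun hij).comp ((measurable_pi_apply a).mul (measurable_pi_apply k))
          ((measurable_pi_apply l).mul (measurable_pi_apply b))
      have hh : ∫ ω, (x i ω a * x i ω k) * (x j ω l * x j ω b) ∂P
          = (∫ ω, x i ω a * x i ω k ∂P) * ∫ ω, x j ω l * x j ω b ∂P :=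
        hind.integral_mul_eq_mul_integral (hint2 i i a k).aestronglyMeasurable
          (hint2 j j l b).aestronglyMeasurable
      rw [hh]
      have h1 : ∫ ω, x i ω a * x i ω k ∂P = H a k := by
        conv_rhs => rw [← hcov i]
        rfl
      have h2 : ∫ ω, x j ω l * x j ω b ∂P = H l b := by
        conv_rhs => rw [← hcov j]
        rfl
      rw [h1, h2]
    ext a b
    show (∫ ω, _ ∂P) = H a b
    simp only [hptw]
    rw [integral_finset_sum _ (fun k _ => integrable_finset_sum _ fun l _ =>
      (hint4 i j a k l b).const_mul (H⁻¹ k l))]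
    have hsum : ∀ k : Fin d, (∫ ω, ∑ l, H⁻¹ k l * (x i ω a * x i ω k * (x j ω l * x j ω b)) ∂P)
        = ∑ l, H⁻¹ k l * (H a k * H l b) := by
      intro k
      rw [integral_finset_sum _ (fun l _ => (hint4 i j a k l b).const_mul (H⁻¹ k l))]
      exact Finset.sum_congr rfl fun l _ => by rw [integral_const_mul, hIJ a k l b]
    rw [Finset.sum_congr rfl fun k _ => hsum k]
    have hfin : ∑ k, ∑ l, H⁻¹ k l * (H a k * H l b) = (H * H⁻¹ * H) a b := by
      simp only [Matrix.mul_apply, Finset.sum_mul]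
      rw [Finset.sum_comm]
      exact Finset.sum_congr rfl fun k _ => Finset.sum_congr rfl fun l _ => by ring
    rw [hfin, Matrix.mul_nonsing_inv _ (isUnit_iff_ne_zero.2 hH.det_pos.ne'), one_mul]
  have hdiag : ∀ i, M i i = D i := by
    intro i
    ext a b
    show (∫ ω, _ ∂P) = ∫ ω, _ ∂P
    congr 1
    funext ω
    rw [hptw i i ω a b]
    show _ = (x i ω ⬝ᵥ H⁻¹ *ᵥ x i ω) * (x i ω a * x i ω b)
    simp only [dotProduct, Matrix.mulVec, Finset.sum_mul, Finset.mul_sum]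
    refine Finset.sum_congr rfl fun k _ => ?_
    exact Finset.sum_congr rfl fun l _ => by ring
  have hsplit : ∑ i, ∑ j, M i j = (∑ i, D i) + ((m * (m-1) : ℕ) : ℝ) • H := by
    have hrow : ∀ i, ∑ j, M i j = D i + (((m-1 : ℕ) : ℝ)) • H := by
      intro i
      rw [← Finset.sum_erase_add _ _ (Finset.mem_univ i), hdiag i, add_comm]
      congr 1
      rw [Finset.sum_congr rfl (fun j hj => hoff i j (Finset.ne_of_mem_erase hj).symm),
        Finset.sum_const, Finset.card_erase_of_mem (Finset.mem_univ i), Finset.card_univ,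
        Fintype.card_fin, ← Nat.cast_smul_eq_nsmul ℝ]
    rw [Finset.sum_congr rfl fun i _ => hrow i, Finset.sum_add_distrib, Finset.sum_const,
      Finset.card_univ, Fintype.card_fin]
    congr 1
    rw [← Nat.cast_smul_eq_nsmul ℝ, smul_smul, ← Nat.cast_mul]
  have hkey : (κt / (m : ℝ) + ((m : ℝ) - 1) / (m : ℝ)) • H -
      (Matrix.of fun a b =>
          ∫ ω, (((1 / (m : ℝ)) • ∑ i, Matrix.vecMulVec (x i ω) (x i ω)) * H⁻¹ *
              ((1 / (m : ℝ)) • ∑ i, Matrix.vecMulVec (x i ω) (x i ω))) a b ∂P)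
      = ((1:ℝ)/(m:ℝ)^2) • ∑ i, (κt • H - D i) := by
    rw [hE, hsplit]
    have hmm : ((m * (m-1) : ℕ) : ℝ) = (m : ℝ) * ((m:ℝ) - 1) := by
      push_cast [Nat.cast_sub hm]
      ring
    have h1 : ∑ i : Fin m, (κt • H - D i) = ((m:ℝ) * κt) • H - ∑ i, D i := by
      rw [Finset.sum_sub_distrib, Finset.sum_const, Finset.card_univ, Fintype.card_fin,
        ← Nat.cast_smul_eq_nsmul ℝ, smul_smul]
    have h2 : ((m*(m-1):ℕ):ℝ) • H = ((m:ℝ)*((m:ℝ)-1)) • H := by rw [hmm]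
    rw [h1, h2]
    ext a b
    simp only [Matrix.sub_apply, Matrix.smul_apply, Matrix.add_apply, Matrix.sum_apply,
      smul_eq_mul]
    field_simp
    ring
  have hpsd : (((1:ℝ)/(m:ℝ)^2) • ∑ i, (κt • H - D i)).PosSemidef :=
    aux_psd_smul_sum (by positivity) fun i => hstat i
  constructor
  · have : ((κt - 1) / (m : ℝ)) • H -
        ((Matrix.of fun a b =>
            ∫ ω, (((1 / (m : ℝ)) • ∑ i, Matrix.vecMulVec (x i ω) (x i ω)) * H⁻¹ *
                ((1 / (m : ℝ)) • ∑ i, Matrix.vecMulVec (x i ω) (x i ω))) a b ∂P) - H)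
        = ((1:ℝ)/(m:ℝ)^2) • ∑ i, (κt • H - D i) := by
      rw [← hkey]
      ext a b
      simp only [Matrix.sub_apply, Matrix.smul_apply, Matrix.add_apply, smul_eq_mul]
      field_simp
      ring
    rw [this]; exact hpsd
  · rw [hkey]; exact hpsd
end

section
/- Let d ∈ ℕ, let G : ℕ × ℝ^d → ℝ^d be an arbitrary map (interpreted as the stochastic gradient realization at step t evaluated at the given point), and let η, α, δ > 0. Set γ = (1−α)/(1+α), η₁ = η, η₂ = (η − αδ)/(1+α). Define sequences by rule A: w^A_{t+1} = u^A_t − η₁ G(t, u^A_t), u^A_{t+1} = (1+γ) w^A_{t+1} − γ w^A_t + η₂ G(t, u^A_t), with u^A₀ = w^A₀ = w₀; and by rule B: w^B_{t+1} = u^B_t − η G(t, u^B_t), v_{t+1} = (1−α) v_t + α u^B_t − δ G(t, u^B_t), u^B_{t+1} = (α v_{t+1} + w^B_{t+1})/(1+α), with v₀ = u^B₀ = w^B₀ = w₀. Then for all t ≥ 0, w^A_t = w^B_t and u^A_t = u^B_t. (Thus the two forms of the MaSS update rules are equivalent under this bijection of hyper-parameters.) -/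
/-- Equivalence of the two forms of the MaSS update rules. Rule A is the
momentum-plus-compensation form (step size `η₁`, compensation parameter `η₂`, momentum `γ`);
rule B is the three-variable form (step size `η`, acceleration parameter `α`, secondary step
size `δ`). Under the hyper-parameter bijection `γ = (1−α)/(1+α)`, `η₁ = η`,
`η₂ = (η − αδ)/(1+α)`, the two rules generate identical iterates. -/
theorem mass_update_rules_equivalent
    (d : ℕ) (G : ℕ → (Fin d → ℝ) → (Fin d → ℝ)) (η α δ : ℝ)
    (hη : 0 < η) (hα : 0 < α) (hδ : 0 < δ)
    (γ η₁ η₂ : ℝ)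
    (hγ : γ = (1 - α) / (1 + α)) (hη₁ : η₁ = η) (hη₂ : η₂ = (η - α * δ) / (1 + α))
    (w₀ : Fin d → ℝ)
    (wA uA wB vB uB : ℕ → Fin d → ℝ)
    (hwA0 : wA 0 = w₀) (huA0 : uA 0 = w₀)
    (hwA : ∀ t, wA (t + 1) = uA t - η₁ • G t (uA t))
    (huA : ∀ t, uA (t + 1) = (1 + γ) • wA (t + 1) - γ • wA t + η₂ • G t (uA t))
    (hwB0 : wB 0 = w₀) (hvB0 : vB 0 = w₀) (huB0 : uB 0 = w₀)
    (hwB : ∀ t, wB (t + 1) = uB t - η • G t (uB t))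
    (hvB : ∀ t, vB (t + 1) = (1 - α) • vB t + α • uB t - δ • G t (uB t))
    (huB : ∀ t, uB (t + 1) = (1 / (1 + α)) • (α • vB (t + 1) + wB (t + 1))) :
    ∀ t, wA t = wB t ∧ uA t = uB t := by

  have hα1 : (1:ℝ) + α ≠ 0 := by positivity
  suffices h : ∀ t, wA t = wB t ∧ uA t = uB t ∧ α • vB t = (1 + α) • uB t - wB t by
    intro t; exact ⟨(h t).1, (h t).2.1⟩
  intro t
  induction t with
  | zero =>
    refine ⟨by rw [hwA0, hwB0], by rw [huA0, huB0], ?_⟩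
    rw [hvB0, huB0, hwB0]
    funext i
    simp only [Pi.smul_apply, Pi.sub_apply, smul_eq_mul]
    ring
  | succ t ih =>
    obtain ⟨hw, hu, hv⟩ := ih
    have hwnew : wA (t + 1) = wB (t + 1) := by
      rw [hwA, hwB, hη₁, hu]
    refine ⟨hwnew, ?_, ?_⟩
    · rw [huA, hwA, huB, hvB, hwB, hη₁, hη₂, hγ, hu, hw]
      funext i
      have hvi := congrFun hv i
      simp only [Pi.smul_apply, Pi.sub_apply, Pi.add_apply, smul_eq_mul] at hvi ⊢
      field_simp
      linear_combination (α - 1) * hvi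
    · rw [huB]
      funext i
      simp only [Pi.smul_apply, Pi.sub_apply, Pi.add_apply, smul_eq_mul]
      field_simp
      ring
end

section
/- Let x be a centered Gaussian random vector in ℝ^d with symmetric positive definite covariance matrix H, fix w* ∈ ℝ^d, and define the per-sample square loss f_x(w) = (1/2)⟨w − w*, x⟩² (with gradient ∇f_x(w) = ⟨w − w*, x⟩ x) and the population loss f(w) = E[f_x(w)] (with gradient ∇f(w) = H(w − w*)). Suppose ρ ∈ ℝ satisfies the strong growth condition E[‖∇f_x(w)‖²] ≤ ρ ‖∇f(w)‖² for all w ∈ ℝ^d. Then ρ ≥ 2 + tr(H)/λ_min(H); in particular ρ > κ, where κ = λ_max(H)/λ_min(H) is the condition number of H. -/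
open MeasureTheory ProbabilityTheory Matrix
open Real Filter Set Topology

noncomputable def gInt (n : ℕ) : ℝ := ∫ x : ℝ, x ^ n * rexp (-x ^ 2 / 2)

lemma integrable_gInt (n : ℕ) : Integrable (fun x : ℝ => x ^ n * rexp (-x ^ 2 / 2)) := by
  have h := integrable_rpow_mul_exp_neg_mul_sq (b := (2:ℝ)⁻¹) (by norm_num) (s := (n:ℝ))
    (lt_of_lt_of_le neg_one_lt_zero (Nat.cast_nonneg n))
  have he : ∀ x : ℝ, -(2:ℝ)⁻¹ * x ^ 2 = -x ^ 2 / 2 := fun x => by ring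
  simpa only [Real.rpow_natCast, he] using h

lemma tendsto_gTop (n : ℕ) :
    Tendsto (fun x : ℝ => x ^ n * rexp (-x ^ 2 / 2)) atTop (𝓝 0) := by
  have hhalf : Tendsto (fun x : ℝ => rexp (-(1/2) * x)) atTop (𝓝 0) := by
    have := tendsto_exp_neg_atTop_nhds_zero.comp (tendsto_id.atTop_div_const two_pos)
    refine this.congr fun x => ?_
    simp only [Function.comp]
    congr 1
    simp only [id]
    ring
  have h := (rpow_mul_exp_neg_mul_sq_isLittleO_exp_neg (by norm_num : (0:ℝ) < 2⁻¹)
    (n:ℝ)).tendsto_zero_of_tendsto hhalf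
  have he : ∀ x : ℝ, -(2:ℝ)⁻¹ * x ^ 2 = -x ^ 2 / 2 := fun x => by ring
  simpa only [Real.rpow_natCast, he] using h

lemma tendsto_gBot (n : ℕ) :
    Tendsto (fun x : ℝ => x ^ n * rexp (-x ^ 2 / 2)) atBot (𝓝 0) := by
  have h := ((tendsto_gTop n).comp tendsto_neg_atBot_atTop).const_mul ((-1:ℝ) ^ n)
  rw [mul_zero] at h
  refine h.congr fun x => ?_
  simp only [Function.comp]
  rw [neg_sq, ← mul_assoc, ← mul_pow]
  norm_num

lemma gInt_succ_succ (n : ℕ) : gInt (n + 2) = (n + 1) * gInt n := by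
  set f : ℝ → ℝ := fun x => x ^ (n+2) * rexp (-x ^ 2 / 2) - (n+1) * (x ^ n * rexp (-x ^ 2 / 2))
    with hf_def
  set F : ℝ → ℝ := fun x => -(x ^ (n+1) * rexp (-x ^ 2 / 2)) with hF_def
  have hder : ∀ x : ℝ, HasDerivAt F (f x) x := by
    intro x
    have h1 : HasDerivAt (fun x : ℝ => x ^ (n+1)) ((n+1) * x ^ n) x := by
      simpa using hasDerivAt_pow (n+1) x
    have h0 : HasDerivAt (fun x : ℝ => -x ^ 2 / 2) (-x) x := by
      have := (hasDerivAt_pow 2 x).neg.div_const 2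
      refine this.congr_deriv ?_
      simp
      ring
    have h2 := h0.exp
    have := (h1.mul h2).neg
    refine this.congr_deriv ?_
    simp only [hf_def]
    ring
  have hfi : Integrable f := ((integrable_gInt (n+2)).sub ((integrable_gInt n).const_mul _))
  have htop : Tendsto F atTop (𝓝 0) := by simpa using (tendsto_gTop (n+1)).neg
  have hbot : Tendsto F atBot (𝓝 0) := by simpa using (tendsto_gBot (n+1)).neg
  have h1 : ∫ x in Ioi (0:ℝ), f x = 0 - F 0 :=
    integral_Ioi_of_hasDerivAt_of_tendsto' (fun x _ => hder x) hfi.integrableOn htop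
  have h2 : ∫ x in Iic (0:ℝ), f x = F 0 - 0 :=
    integral_Iic_of_hasDerivAt_of_tendsto' (fun x _ => hder x) hfi.integrableOn hbot
  have h3 : ∫ x, f x = 0 := by
    rw [← intervalIntegral.integral_Iic_add_Ioi (b := (0:ℝ)) hfi.integrableOn hfi.integrableOn, h1, h2]
    ring
  have h4 : ∫ x, f x = gInt (n+2) - (n+1) * gInt n := by
    rw [hf_def]
    rw [integral_sub (integrable_gInt (n+2)) ((integrable_gInt n).const_mul _),
      integral_const_mul]
    rfl
  rw [h4] at h3
  linarith

lemma gInt_odd (n : ℕ) (hn : Odd n) : gInt n = 0 := by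
  have hemb : MeasurableEmbedding fun x : ℝ => -x :=
    (Homeomorph.neg ℝ).isClosedEmbedding.measurableEmbedding
  have hmap := Measure.map_neg_eq_self (volume : Measure ℝ)
  have h : gInt n = ∫ x : ℝ, (-x) ^ n * rexp (-(-x) ^ 2 / 2) := by
    calc gInt n = ∫ x, x ^ n * rexp (-x ^ 2 / 2) ∂(Measure.map (fun x : ℝ => -x) volume) := by
          rw [hmap]; rfl
      _ = _ := hemb.integral_map _
  have h2 : ∀ x : ℝ, (-x) ^ n * rexp (-(-x) ^ 2 / 2) = -(x ^ n * rexp (-x ^ 2 / 2)) := by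
    intro x
    rw [hn.neg_pow, neg_sq]
    ring
  simp only [h2, integral_neg] at h
  have : gInt n = -gInt n := h
  linarith

open scoped NNReal ENNReal in
lemma pdf_as_nnreal : gaussianPDF 0 1 = fun x => ((Real.toNNReal (gaussianPDFReal 0 1 x) : ℝ≥0) : ℝ≥0∞) := rfl

noncomputable def gmom (n : ℕ) : ℝ := ∫ x, x ^ n ∂(gaussianReal 0 1)

lemma gaussianPDFReal_zero_one (x : ℝ) :
    gaussianPDFReal 0 1 x = (√(2 * π))⁻¹ * (1 * rexp (-x ^ 2 / 2)) := by
  simp [gaussianPDFReal, one_mul]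

lemma integral_gaussianReal_zero_one (g : ℝ → ℝ) :
    ∫ x, g x ∂(gaussianReal 0 1)
      = ∫ x, gaussianPDFReal 0 1 x * g x := by
  rw [gaussianReal_of_var_ne_zero 0 one_ne_zero]
  rw [pdf_as_nnreal, integral_withDensity_eq_integral_smul (measurable_gaussianPDFReal 0 1).real_toNNReal]
  congr 1
  funext x
  rw [NNReal.smul_def, Real.coe_toNNReal _ (gaussianPDFReal_nonneg 0 1 x), smul_eq_mul]

lemma gmom_eq (n : ℕ) : gmom n = (√(2 * π))⁻¹ * gInt n := by
  rw [gmom, integral_gaussianReal_zero_one, gInt, ← integral_const_mul]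
  congr 1
  funext x
  rw [gaussianPDFReal_zero_one]
  ring

lemma integrable_pow_gaussianReal (n : ℕ) :
    Integrable (fun x : ℝ => x ^ n) (gaussianReal 0 1) := by
  rw [gaussianReal_of_var_ne_zero 0 one_ne_zero]
  rw [pdf_as_nnreal, integrable_withDensity_iff_integrable_smul
    (measurable_gaussianPDFReal 0 1).real_toNNReal]
  have h := (integrable_gInt n).const_mul (√(2 * π))⁻¹
  refine h.congr ?_
  refine ae_of_all _ fun x => ?_
  dsimp only
  rw [NNReal.smul_def, Real.coe_toNNReal _ (gaussianPDFReal_nonneg 0 1 x),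
    gaussianPDFReal_zero_one, smul_eq_mul]
  ring

@[simp] lemma gmom_zero : gmom 0 = 1 := by
  simp [gmom]

@[simp] lemma gmom_one : gmom 1 = 0 := by
  rw [gmom_eq, gInt_odd 1 odd_one, mul_zero]

@[simp] lemma gmom_two : gmom 2 = 1 := by
  have h0 : gmom 0 = 1 := gmom_zero
  rw [gmom_eq] at h0
  rw [gmom_eq, show (2:ℕ) = 0 + 2 from rfl, gInt_succ_succ 0]
  simp only [Nat.cast_zero, zero_add, one_mul]
  exact h0

@[simp] lemma gmom_three : gmom 3 = 0 := by
  rw [gmom_eq, gInt_odd 3 (⟨1, by norm_num⟩), mul_zero]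

@[simp] lemma gmom_four : gmom 4 = 3 := by
  have h2 : gmom 2 = 1 := gmom_two
  rw [gmom_eq] at h2 ⊢
  rw [show (4:ℕ) = 2 + 2 from rfl, gInt_succ_succ 2]
  push_cast
  calc (√(2 * π))⁻¹ * ((2 + 1) * gInt 2) = 3 * ((√(2 * π))⁻¹ * gInt 2) := by ring
    _ = 3 := by rw [h2]; norm_num

/-- `z` is a standard Gaussian vector: its coordinates are i.i.d. `N(0,1)`. -/
def IsStdGaussianVector {Ω : Type} [MeasurableSpace Ω] (P : Measure Ω) {d : ℕ}
    (z : Ω → Fin d → ℝ) : Prop :=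
  Measurable z ∧
  iIndepFun (fun i ω => z ω i) P ∧
  ∀ i, Measure.map (fun ω => z ω i) P = gaussianReal 0 1

/-- `x` is a centered Gaussian vector with covariance `H`: `x = A z` for some matrix `A`
with `AAᵀ = H` and `z` a standard Gaussian vector. -/
def IsCenteredGaussianWithCov {Ω : Type} [MeasurableSpace Ω] (P : Measure Ω) {d : ℕ}
    (x : Ω → Fin d → ℝ) (H : Matrix (Fin d) (Fin d) ℝ) : Prop :=
  ∃ (A : Matrix (Fin d) (Fin d) ℝ) (z : Ω → Fin d → ℝ),
    IsStdGaussianVector P z ∧ A * Aᵀ = H ∧ ∀ ω, x ω = A.mulVec (z ω)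

section ZLemmas

variable {Ω : Type} [MeasurableSpace Ω] {P : Measure Ω} [IsProbabilityMeasure P]
  {d : ℕ} {z : Ω → Fin d → ℝ}

omit [IsProbabilityMeasure P] in
lemma IsStdGaussianVector.meas (hz : IsStdGaussianVector P z) (i : Fin d) :
    Measurable fun ω => z ω i := (measurable_pi_apply i).comp hz.1

lemma IsStdGaussianVector.int (hz : IsStdGaussianVector P z) (i : Fin d) (n : ℕ) :
    Integrable (fun ω => z ω i ^ n) P := by
  have hm : Measurable fun x : ℝ => x ^ n := measurable_id.pow_const n
  have h := integrable_pow_gaussianReal n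
  rw [← hz.2.2 i, integrable_map_measure hm.aestronglyMeasurable
    (hz.meas i).aemeasurable] at h
  exact h

lemma IsStdGaussianVector.mom (hz : IsStdGaussianVector P z) (i : Fin d) (n : ℕ) :
    ∫ ω, z ω i ^ n ∂P = gmom n := by
  have hm : Measurable fun x : ℝ => x ^ n := measurable_id.pow_const n
  rw [gmom, ← hz.2.2 i,
    integral_map (hz.meas i).aemeasurable hm.aestronglyMeasurable]

lemma IsStdGaussianVector.prod_int (hz : IsStdGaussianVector P z) (e : Fin d → ℕ)
    (s : Finset (Fin d)) :
    Integrable (fun ω => ∏ i ∈ s, z ω i ^ e i) P ∧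
      ∫ ω, ∏ i ∈ s, z ω i ^ e i ∂P = ∏ i ∈ s, gmom (e i) := by
  classical
  have hmeas : ∀ i : Fin d, Measurable (fun ω => z ω i ^ e i) :=
    fun i => (hz.meas i).pow_const (e i)
  have hiid : iIndepFun (fun i ω => z ω i ^ e i) P :=
    hz.2.1.comp (fun i x => x ^ e i) (fun i => measurable_id.pow_const (e i))
  induction s using Finset.induction_on with
  | empty => exact ⟨by simpa using (integrable_const (1:ℝ)), by simp⟩
  | @insert a s ha ih =>
    obtain ⟨ihInt, ihVal⟩ := ih
    have hindep : IndepFun (∏ j ∈ s, fun ω => z ω j ^ e j) (fun ω => z ω a ^ e a) P :=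
      hiid.indepFun_finsetProd_of_notMem hmeas ha
    have hps : (∏ j ∈ s, fun ω => z ω j ^ e j) = fun ω => ∏ j ∈ s, z ω j ^ e j := by
      funext ω; simp
    rw [hps] at hindep
    have hint_a := hz.int a (e a)
    have hIntMul : Integrable ((fun ω => ∏ j ∈ s, z ω j ^ e j) * fun ω => z ω a ^ e a) P :=
      hindep.integrable_mul ihInt hint_a
    have hfe : (fun ω => ∏ i ∈ insert a s, z ω i ^ e i)
        = (fun ω => ∏ j ∈ s, z ω j ^ e j) * fun ω => z ω a ^ e a := by
      funext ω
      simp only [Pi.mul_apply, Finset.prod_insert ha]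
      ring
    refine ⟨by rw [hfe]; exact hIntMul, ?_⟩
    rw [hfe, Finset.prod_insert ha]
    have hval := hindep.integral_mul_eq_mul_integral ihInt.aestronglyMeasurable hint_a.aestronglyMeasurable
    calc ∫ ω, ((fun ω => ∏ j ∈ s, z ω j ^ e j) * fun ω => z ω a ^ e a) ω ∂P
        = (∫ ω, ∏ j ∈ s, z ω j ^ e j ∂P) * ∫ ω, z ω a ^ e a ∂P := hval
      _ = gmom (e a) * ∏ i ∈ s, gmom (e i) := by rw [ihVal, hz.mom a (e a)]; ring

end ZLemmas

section ZLemmas2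

variable {Ω : Type} [MeasurableSpace Ω] {P : Measure Ω} [IsProbabilityMeasure P]
  {d : ℕ} {z : Ω → Fin d → ℝ}

lemma IsStdGaussianVector.int2 (hz : IsStdGaussianVector P z) {i j : Fin d} (hij : i ≠ j)
    (a b : ℕ) :
    Integrable (fun ω => z ω i ^ a * z ω j ^ b) P ∧
      ∫ ω, z ω i ^ a * z ω j ^ b ∂P = gmom a * gmom b := by
  classical
  have h := hz.prod_int (fun t => if t = i then a else b) ({i, j} : Finset (Fin d))
  simpa [Finset.prod_pair hij, Ne.symm hij] using h

lemma IsStdGaussianVector.int3 (hz : IsStdGaussianVector P z) {i j k : Fin d}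
    (hij : i ≠ j) (hik : i ≠ k) (hjk : j ≠ k) (a b c : ℕ) :
    Integrable (fun ω => z ω i ^ a * z ω j ^ b * z ω k ^ c) P ∧
      ∫ ω, z ω i ^ a * z ω j ^ b * z ω k ^ c ∂P = gmom a * gmom b * gmom c := by
  classical
  have h := hz.prod_int (fun t => if t = i then a else if t = j then b else c)
    ({i, j, k} : Finset (Fin d))
  have hmem : i ∉ ({j, k} : Finset (Fin d)) := by simp [hij, hik]
  simpa [Finset.prod_insert hmem, Finset.prod_pair hjk, Ne.symm hij, Ne.symm hik, Ne.symm hjk,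
    mul_assoc] using h

lemma IsStdGaussianVector.int4 (hz : IsStdGaussianVector P z) {i j k l : Fin d}
    (hij : i ≠ j) (hik : i ≠ k) (hil : i ≠ l) (hjk : j ≠ k) (hjl : j ≠ l) (hkl : k ≠ l) :
    Integrable (fun ω => z ω i * z ω j * z ω k * z ω l) P ∧
      ∫ ω, z ω i * z ω j * z ω k * z ω l ∂P = 0 := by
  classical
  have h := hz.prod_int (fun _ => 1) ({i, j, k, l} : Finset (Fin d))
  have hmem1 : i ∉ ({j, k, l} : Finset (Fin d)) := by simp [hij, hik, hil]
  have hmem2 : j ∉ ({k, l} : Finset (Fin d)) := by simp [hjk, hjl]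
  simp only [Finset.prod_insert hmem1, Finset.prod_insert hmem2, Finset.prod_pair hkl,
    pow_one, gmom_one, mul_zero, zero_mul] at h
  exact ⟨by simpa [mul_assoc] using h.1, by rw [← h.2]; congr 1; funext ω; ring⟩

lemma IsStdGaussianVector.quad (hz : IsStdGaussianVector P z) (i j k l : Fin d) :
    Integrable (fun ω => z ω i * z ω j * z ω k * z ω l) P ∧
      ∫ ω, z ω i * z ω j * z ω k * z ω l ∂P
        = (if i = j then (1:ℝ) else 0) * (if k = l then 1 else 0)
          + (if i = k then (1:ℝ) else 0) * (if j = l then 1 else 0)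
          + (if i = l then (1:ℝ) else 0) * (if j = k then 1 else 0) := by
  classical
  rcases eq_or_ne i j with rfl | hij
  · rcases eq_or_ne i k with rfl | hik
    · rcases eq_or_ne i l with rfl | hil
      · -- all equal
        have hfe : (fun ω => z ω i * z ω i * z ω i * z ω i) = fun ω => z ω i ^ 4 := by
          funext ω; ring
        rw [hfe]
        exact ⟨hz.int i 4, by rw [hz.mom i 4]; simp; norm_num⟩
      · have hfe : (fun ω => z ω i * z ω i * z ω i * z ω l) = fun ω => z ω i ^ 3 * z ω l ^ 1 := by
          funext ω; ring
        rw [hfe]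
        obtain ⟨h1, h2⟩ := hz.int2 hil 3 1
        exact ⟨h1, by rw [h2]; simp [hil]⟩
    · rcases eq_or_ne k l with rfl | hkl
      · have hfe : (fun ω => z ω i * z ω i * z ω k * z ω k) = fun ω => z ω i ^ 2 * z ω k ^ 2 := by
          funext ω; ring
        rw [hfe]
        obtain ⟨h1, h2⟩ := hz.int2 hik 2 2
        exact ⟨h1, by rw [h2]; simp [hik]⟩
      · rcases eq_or_ne i l with rfl | hil
        · have hfe : (fun ω => z ω i * z ω i * z ω k * z ω i)
              = fun ω => z ω i ^ 3 * z ω k ^ 1 := by funext ω; ring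
          rw [hfe]
          obtain ⟨h1, h2⟩ := hz.int2 hik 3 1
          exact ⟨h1, by rw [h2]; simp [hik, Ne.symm hik]⟩
        · have hfe : (fun ω => z ω i * z ω i * z ω k * z ω l)
              = fun ω => z ω i ^ 2 * z ω k ^ 1 * z ω l ^ 1 := by funext ω; ring
          rw [hfe]
          obtain ⟨h1, h2⟩ := hz.int3 hik hil hkl 2 1 1
          exact ⟨h1, by rw [h2]; simp [hik, hil, hkl]⟩
  · rcases eq_or_ne i k with rfl | hik
    · rcases eq_or_ne j l with rfl | hjl
      · have hfe : (fun ω => z ω i * z ω j * z ω i * z ω j)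
            = fun ω => z ω i ^ 2 * z ω j ^ 2 := by funext ω; ring
        rw [hfe]
        obtain ⟨h1, h2⟩ := hz.int2 hij 2 2
        exact ⟨h1, by rw [h2]; simp [hij]⟩
      · rcases eq_or_ne i l with rfl | hil
        · have hfe : (fun ω => z ω i * z ω j * z ω i * z ω i)
              = fun ω => z ω i ^ 3 * z ω j ^ 1 := by funext ω; ring
          rw [hfe]
          obtain ⟨h1, h2⟩ := hz.int2 hij 3 1
          exact ⟨h1, by rw [h2]; simp [hij, Ne.symm hij]⟩
        · have hfe : (fun ω => z ω i * z ω j * z ω i * z ω l)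
              = fun ω => z ω i ^ 2 * z ω j ^ 1 * z ω l ^ 1 := by funext ω; ring
          rw [hfe]
          obtain ⟨h1, h2⟩ := hz.int3 hij hil hjl 2 1 1
          exact ⟨h1, by rw [h2]; simp [hij, hil, hjl]⟩
    · rcases eq_or_ne i l with rfl | hil
      · rcases eq_or_ne j k with rfl | hjk
        · have hfe : (fun ω => z ω i * z ω j * z ω j * z ω i)
              = fun ω => z ω i ^ 2 * z ω j ^ 2 := by funext ω; ring
          rw [hfe]
          obtain ⟨h1, h2⟩ := hz.int2 hij 2 2
          exact ⟨h1, by rw [h2]; simp [hij]⟩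
        · have hfe : (fun ω => z ω i * z ω j * z ω k * z ω i)
              = fun ω => z ω i ^ 2 * z ω j ^ 1 * z ω k ^ 1 := by funext ω; ring
          rw [hfe]
          obtain ⟨h1, h2⟩ := hz.int3 hij hik hjk 2 1 1
          exact ⟨h1, by rw [h2]; simp [hij, hik, hjk, Ne.symm hik]⟩
      · rcases eq_or_ne j k with rfl | hjk
        · rcases eq_or_ne j l with rfl | hjl
          · have hfe : (fun ω => z ω i * z ω j * z ω j * z ω j)
                = fun ω => z ω i ^ 1 * z ω j ^ 3 := by funext ω; ring
            rw [hfe]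
            obtain ⟨h1, h2⟩ := hz.int2 hij 1 3
            exact ⟨h1, by rw [h2]; simp [hij]⟩
          · have hfe : (fun ω => z ω i * z ω j * z ω j * z ω l)
                = fun ω => z ω i ^ 1 * z ω j ^ 2 * z ω l ^ 1 := by funext ω; ring
            rw [hfe]
            obtain ⟨h1, h2⟩ := hz.int3 hij hil hjl 1 2 1
            exact ⟨h1, by rw [h2]; simp [hij, hil, hjl]⟩
        · rcases eq_or_ne j l with rfl | hjl
          · have hfe : (fun ω => z ω i * z ω j * z ω k * z ω j)
                = fun ω => z ω i ^ 1 * z ω j ^ 2 * z ω k ^ 1 := by funext ω; ring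
            rw [hfe]
            obtain ⟨h1, h2⟩ := hz.int3 hij hik hjk 1 2 1
            exact ⟨h1, by rw [h2]; simp [hij, hik, hjk, Ne.symm hjk]⟩
          · rcases eq_or_ne k l with rfl | hkl
            · have hfe : (fun ω => z ω i * z ω j * z ω k * z ω k)
                  = fun ω => z ω i ^ 1 * z ω j ^ 1 * z ω k ^ 2 := by funext ω; ring
              rw [hfe]
              obtain ⟨h1, h2⟩ := hz.int3 hij hik hjk 1 1 2
              exact ⟨h1, by rw [h2]; simp [hij, hik, hjk]⟩
            · obtain ⟨h1, h2⟩ := hz.int4 hij hik hil hjk hjl hkl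
              exact ⟨h1, by rw [h2]; simp [hij, hik, hil, hjk, hjl, hkl]⟩

end ZLemmas2

section ZLemmas3

variable {Ω : Type} [MeasurableSpace Ω] {P : Measure Ω} [IsProbabilityMeasure P]
  {d : ℕ} {z : Ω → Fin d → ℝ}

lemma IsStdGaussianVector.sq_mul_sq (hz : IsStdGaussianVector P z) (c b : Fin d → ℝ) :
    Integrable (fun ω => ((∑ p, c p * z ω p) * (∑ q, b q * z ω q)) ^ 2) P ∧
      ∫ ω, ((∑ p, c p * z ω p) * (∑ q, b q * z ω q)) ^ 2 ∂P
        = (∑ p, c p ^ 2) * (∑ p, b p ^ 2) + 2 * (∑ p, c p * b p) ^ 2 := by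
  classical
  have expand : ∀ ω, ((∑ p, c p * z ω p) * (∑ q, b q * z ω q)) ^ 2
      = ∑ p, ∑ r, ∑ q, ∑ s,
          (c p * b q * c r * b s) * (z ω p * z ω q * z ω r * z ω s) := by
    intro ω
    have h1 : (∑ p, c p * z ω p) * (∑ q, b q * z ω q)
        = ∑ p, ∑ q, (c p * z ω p) * (b q * z ω q) := Finset.sum_mul_sum _ _ _ _
    rw [pow_two, h1, Finset.sum_mul_sum]
    refine Finset.sum_congr rfl fun p _ => ?_
    refine Finset.sum_congr rfl fun r _ => ?_
    rw [Finset.sum_mul_sum]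
    refine Finset.sum_congr rfl fun q _ => ?_
    refine Finset.sum_congr rfl fun s _ => ?_
    ring
  have hbase : ∀ p q r s : Fin d,
      Integrable (fun ω => (c p * b q * c r * b s) * (z ω p * z ω q * z ω r * z ω s)) P :=
    fun p q r s => ((hz.quad p q r s).1.const_mul _)
  have hint_q : ∀ p r q, Integrable
      (fun ω => ∑ s, (c p * b q * c r * b s) * (z ω p * z ω q * z ω r * z ω s)) P :=
    fun p r q => integrable_finset_sum _ fun s _ => hbase p q r s
  have hint_r : ∀ p r, Integrable
      (fun ω => ∑ q, ∑ s, (c p * b q * c r * b s) * (z ω p * z ω q * z ω r * z ω s)) P :=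
    fun p r => integrable_finset_sum _ fun q _ => hint_q p r q
  have hint_p : ∀ p, Integrable
      (fun ω => ∑ r, ∑ q, ∑ s, (c p * b q * c r * b s) * (z ω p * z ω q * z ω r * z ω s)) P :=
    fun p => integrable_finset_sum _ fun r _ => hint_r p r
  constructor
  · have : Integrable (fun ω => ∑ p, ∑ r, ∑ q, ∑ s,
        (c p * b q * c r * b s) * (z ω p * z ω q * z ω r * z ω s)) P :=
      integrable_finset_sum _ fun p _ => hint_p p
    exact this.congr (ae_of_all _ fun ω => (expand ω).symm)
  · rw [show (fun ω => ((∑ p, c p * z ω p) * (∑ q, b q * z ω q)) ^ 2)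
        = fun ω => ∑ p, ∑ r, ∑ q, ∑ s,
          (c p * b q * c r * b s) * (z ω p * z ω q * z ω r * z ω s) from funext expand]
    rw [integral_finset_sum _ fun p _ => hint_p p]
    have hval : ∀ p r q s : Fin d,
        ∫ ω, (c p * b q * c r * b s) * (z ω p * z ω q * z ω r * z ω s) ∂P
          = (c p * b q * c r * b s) *
            ((if p = q then (1:ℝ) else 0) * (if r = s then 1 else 0)
              + (if p = r then (1:ℝ) else 0) * (if q = s then 1 else 0)
              + (if p = s then (1:ℝ) else 0) * (if q = r then 1 else 0)) := by
      intro p r q s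
      rw [integral_const_mul, (hz.quad p q r s).2]
    calc ∑ p, ∫ ω, (∑ r, ∑ q, ∑ s,
            (c p * b q * c r * b s) * (z ω p * z ω q * z ω r * z ω s)) ∂P
        = ∑ p, ∑ r, ∑ q, ∑ s, (c p * b q * c r * b s) *
            ((if p = q then (1:ℝ) else 0) * (if r = s then 1 else 0)
              + (if p = r then (1:ℝ) else 0) * (if q = s then 1 else 0)
              + (if p = s then (1:ℝ) else 0) * (if q = r then 1 else 0)) := by
          refine Finset.sum_congr rfl fun p _ => ?_
          rw [integral_finset_sum _ fun r _ => hint_r p r]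
          refine Finset.sum_congr rfl fun r _ => ?_
          rw [integral_finset_sum _ fun q _ => hint_q p r q]
          refine Finset.sum_congr rfl fun q _ => ?_
          rw [integral_finset_sum _ fun s _ => hbase p q r s]
          exact Finset.sum_congr rfl fun s _ => hval p r q s
      _ = (∑ p, c p ^ 2) * (∑ p, b p ^ 2) + 2 * (∑ p, c p * b p) ^ 2 := by
          simp only [mul_add, Finset.sum_add_distrib, mul_ite, ite_mul, mul_zero, zero_mul,
            mul_one, one_mul, Finset.sum_ite_eq, Finset.sum_ite_eq', Finset.mem_univ, if_true]
          have hT1 : (∑ x : Fin d, ∑ y : Fin d, c x * b x * c y * b y)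
              = (∑ p, c p * b p) ^ 2 := by
            rw [pow_two, Finset.sum_mul_sum]
            exact Finset.sum_congr rfl fun x _ => Finset.sum_congr rfl fun y _ => by ring
          have hT2 : (∑ x : Fin d, ∑ y : Fin d, ∑ w : Fin d,
                if x = y then c x * b w * c y * b w else 0)
              = ∑ i : Fin d, ∑ j : Fin d, c i ^ 2 * b j ^ 2 := by
            refine Finset.sum_congr rfl fun x _ => ?_
            rw [show (∑ y : Fin d, ∑ w : Fin d, if x = y then c x * b w * c y * b w else 0)
                = ∑ y : Fin d, if x = y then (∑ w : Fin d, c x * b w * c y * b w) else 0 from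
              Finset.sum_congr rfl fun y _ => by by_cases h : x = y <;> simp [h]]
            rw [Finset.sum_ite_eq]
            simp only [Finset.mem_univ, if_true]
            exact Finset.sum_congr rfl fun w _ => by ring
          have hT3 : (∑ x : Fin d, ∑ y : Fin d, ∑ w : Fin d, ∑ v : Fin d,
                if w = y then (if x = v then c x * b w * c y * b v else 0) else 0)
              = (∑ p, c p * b p) ^ 2 := by
            have step : ∀ x y : Fin d, (∑ w : Fin d, ∑ v : Fin d,
                if w = y then (if x = v then c x * b w * c y * b v else 0) else 0)
                = c x * b y * c y * b x := by
              intro x y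
              have hv : ∀ w : Fin d, (∑ v : Fin d,
                  if w = y then (if x = v then c x * b w * c y * b v else 0) else 0)
                  = if w = y then c x * b w * c y * b x else 0 := by
                intro w
                by_cases h : w = y <;> simp [h, Finset.sum_ite_eq]
              rw [Finset.sum_congr rfl fun w _ => hv w, Finset.sum_ite_eq']
              simp
            calc (∑ x : Fin d, ∑ y : Fin d, ∑ w : Fin d, ∑ v : Fin d,
                  if w = y then (if x = v then c x * b w * c y * b v else 0) else 0)
                = ∑ x : Fin d, ∑ y : Fin d, c x * b y * c y * b x :=
                  Finset.sum_congr rfl fun x _ => Finset.sum_congr rfl fun y _ => step x y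
              _ = (∑ p, c p * b p) ^ 2 := by
                  rw [pow_two, Finset.sum_mul_sum]
                  exact Finset.sum_congr rfl fun x _ => Finset.sum_congr rfl fun y _ => by ring
          rw [hT1, hT2, hT3, Finset.sum_mul_sum]
          ring

end ZLemmas3

/-- For Gaussian data the strong growth condition parameter exceeds the condition number:
if `E[‖∇f_x(w)‖²] ≤ ρ‖∇f(w)‖²` for all `w`, where `∇f_x(w) = ⟨w − w*, x⟩x` and
`∇f(w) = H(w − w*)`, then `ρ ≥ 2 + tr(H)/λ_min(H)`, and in particular
`ρ > κ = λ_max(H)/λ_min(H)`. -/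
theorem gaussian_strong_growth_exceeds_condition_number
    (d : ℕ) (Ω : Type) [MeasurableSpace Ω] (P : Measure Ω) [IsProbabilityMeasure P]
    (H : Matrix (Fin d) (Fin d) ℝ) (hH : H.PosDef)
    (x : Ω → Fin d → ℝ)
    (hx : IsCenteredGaussianWithCov P x H)
    (wstar : Fin d → ℝ)
    (lamMin lamMax : ℝ)
    (hmin : IsLeast {c : ℝ | ∃ v : Fin d → ℝ, v ≠ 0 ∧ H.mulVec v = c • v} lamMin)
    (hmax : IsGreatest {c : ℝ | ∃ v : Fin d → ℝ, v ≠ 0 ∧ H.mulVec v = c • v} lamMax)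
    (ρ : ℝ)
    (hsgc : ∀ w : Fin d → ℝ,
      (∫ ω, ∑ i, (((w - wstar) ⬝ᵥ x ω) * x ω i) ^ 2 ∂P)
        ≤ ρ * ∑ i, (H.mulVec (w - wstar) i) ^ 2) :
    2 + H.trace / lamMin ≤ ρ ∧ lamMax / lamMin < ρ := by
  classical
  obtain ⟨A, z, hz, hAH, hxA⟩ := hx
  obtain ⟨⟨v, hv0, hHv⟩, -⟩ := hmin
  obtain ⟨⟨u, hu0, hHu⟩, -⟩ := hmax
  have sum_sq_pos : ∀ y : Fin d → ℝ, y ≠ 0 → 0 < ∑ p, y p ^ 2 := by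
    intro y hy
    rcases (Finset.sum_nonneg fun p _ => sq_nonneg (y p)).eq_or_lt with h | h
    · exfalso
      apply hy
      funext p
      have h1 := (Finset.sum_eq_zero_iff_of_nonneg fun p _ => sq_nonneg (y p)).mp h.symm p
        (Finset.mem_univ p)
      have h2 := pow_eq_zero_iff (n := 2) (by norm_num) |>.mp h1
      simpa using h2
    · exact h
  have hvv := sum_sq_pos v hv0
  have huu := sum_sq_pos u hu0
  have hdotsq : ∀ y : Fin d → ℝ, y ⬝ᵥ y = ∑ p, y p ^ 2 := by
    intro y; simp [dotProduct, pow_two]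
  have hRay : ∀ (y : Fin d → ℝ) (lam : ℝ), H.mulVec y = lam • y →
      y ⬝ᵥ H *ᵥ y = lam * ∑ p, y p ^ 2 := by
    intro y lam hy
    rw [hy, dotProduct_smul, smul_eq_mul, hdotsq]
  have hlamMinPos : 0 < lamMin := by
    have h := hH.dotProduct_mulVec_pos hv0
    rw [show star v = v from rfl, hRay v lamMin hHv] at h
    nlinarith
  -- the vector c = v ᵥ* A = Aᵀ *ᵥ v
  set c : Fin d → ℝ := v ᵥ* A with hc_def
  have hcAt : c = Aᵀ *ᵥ v := (mulVec_transpose A v).symm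
  have hdotc : ∀ ω, v ⬝ᵥ x ω = ∑ j, c j * z ω j := by
    intro ω
    rw [hxA ω, dotProduct_mulVec]
    simp [dotProduct]
    rfl
  have hxi : ∀ ω (i : Fin d), x ω i = ∑ j, A i j * z ω j := by
    intro ω i
    rw [hxA ω]
    simp [mulVec, dotProduct]
  -- key quantities
  have hc2 : ∑ p, c p ^ 2 = lamMin * ∑ p, v p ^ 2 := by
    calc ∑ p, c p ^ 2 = c ⬝ᵥ c := (hdotsq c).symm
      _ = v ⬝ᵥ H *ᵥ v := by
          rw [hcAt]
          nth_rewrite 1 [mulVec_transpose]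
          rw [← dotProduct_mulVec, mulVec_mulVec, hAH]
      _ = lamMin * ∑ p, v p ^ 2 := hRay v lamMin hHv
  have hAc : A *ᵥ c = lamMin • v := by
    rw [hcAt, mulVec_mulVec, hAH, hHv]
  have hcA : ∀ i, ∑ p, c p * A i p = lamMin * v i := by
    intro i
    have h1 : ∑ p, c p * A i p = (A *ᵥ c) i := by
      simp [mulVec, dotProduct, mul_comm]
    rw [h1, hAc]
    simp
  have htr : ∑ i, ∑ p, A i p ^ 2 = H.trace := by
    rw [← hAH]
    simp [Matrix.trace, Matrix.diag, Matrix.mul_apply, Matrix.transpose_apply, pow_two]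
  -- specialize the strong growth condition
  have hs := hsgc (wstar + v)
  rw [add_sub_cancel_left] at hs
  -- per-coordinate expectation
  have hterm : ∀ i : Fin d,
      Integrable (fun ω => ((v ⬝ᵥ x ω) * x ω i) ^ 2) P ∧
        ∫ ω, ((v ⬝ᵥ x ω) * x ω i) ^ 2 ∂P
          = (∑ p, c p ^ 2) * (∑ p, A i p ^ 2) + 2 * (∑ p, c p * A i p) ^ 2 := by
    intro i
    have h := hz.sq_mul_sq c (fun j => A i j)
    have hfe : (fun ω => ((v ⬝ᵥ x ω) * x ω i) ^ 2)
        = fun ω => ((∑ p, c p * z ω p) * (∑ q, A i q * z ω q)) ^ 2 := by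
      funext ω
      rw [hdotc ω, hxi ω i]
    rw [hfe]
    exact h
  rw [integral_finset_sum _ fun i _ => (hterm i).1] at hs
  rw [Finset.sum_congr rfl fun i (_ : i ∈ Finset.univ) => (hterm i).2] at hs
  -- simplify both sides
  have hls : ∑ i, ((∑ p, c p ^ 2) * (∑ p, A i p ^ 2) + 2 * (∑ p, c p * A i p) ^ 2)
      = lamMin * (∑ p, v p ^ 2) * H.trace + 2 * lamMin ^ 2 * (∑ p, v p ^ 2) := by
    rw [Finset.sum_add_distrib, ← Finset.mul_sum, htr, hc2]
    have : ∑ i, 2 * (∑ p, c p * A i p) ^ 2 = 2 * lamMin ^ 2 * ∑ i, v i ^ 2 := by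
      rw [Finset.sum_congr rfl fun i (_ : i ∈ Finset.univ) => by rw [hcA i]]
      rw [show ∀ w : Fin d → ℝ, ∑ i, 2 * (lamMin * w i) ^ 2
          = 2 * lamMin ^ 2 * ∑ i, w i ^ 2 from fun w => by
        rw [Finset.mul_sum]; exact Finset.sum_congr rfl fun i _ => by ring]
    rw [this]
  have hrs : ∑ i, (H.mulVec v i) ^ 2 = lamMin ^ 2 * ∑ p, v p ^ 2 := by
    rw [hHv, Finset.mul_sum]
    exact Finset.sum_congr rfl fun i _ => by simp [smul_eq_mul]; ring
  rw [hls, hrs] at hs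
  -- conclusion 1
  have hkpos : 0 < lamMin ^ 2 * ∑ p, v p ^ 2 := by positivity
  have hconc1 : 2 + H.trace / lamMin ≤ ρ := by
    have h2 : (2 + H.trace / lamMin) * (lamMin ^ 2 * ∑ p, v p ^ 2)
        = lamMin * (∑ p, v p ^ 2) * H.trace + 2 * lamMin ^ 2 * (∑ p, v p ^ 2) := by
      field_simp
      ring
    refine (mul_le_mul_iff_of_pos_right hkpos).mp ?_
    rw [h2]
    exact hs
  refine ⟨hconc1, ?_⟩
  -- conclusion 2 : lamMax ≤ trace
  have hmaxle : lamMax ≤ H.trace := by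
    have hray := hRay u lamMax hHu
    have hy : u ⬝ᵥ H *ᵥ u = ∑ j, (∑ i, A i j * u i) ^ 2 := by
      rw [← hAH, ← mulVec_mulVec, dotProduct_mulVec]
      rw [show u ᵥ* A ⬝ᵥ Aᵀ *ᵥ u = (Aᵀ *ᵥ u) ⬝ᵥ (Aᵀ *ᵥ u) from by
        rw [← mulVec_transpose]]
      rw [hdotsq]
      exact Finset.sum_congr rfl fun j _ => by
        simp [mulVec, dotProduct, Matrix.transpose_apply]
    have hCS : ∑ j, (∑ i, A i j * u i) ^ 2 ≤ ∑ j, (∑ i, A i j ^ 2) * ∑ i, u i ^ 2 := by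
      refine Finset.sum_le_sum fun j _ => ?_
      exact Finset.sum_mul_sq_le_sq_mul_sq _ _ _
    have hswap : ∑ j : Fin d, ∑ i : Fin d, A i j ^ 2 = ∑ i, ∑ p, A i p ^ 2 := Finset.sum_comm
    have : lamMax * ∑ p, u p ^ 2 ≤ H.trace * ∑ p, u p ^ 2 := by
      calc lamMax * ∑ p, u p ^ 2 = u ⬝ᵥ H *ᵥ u := hray.symm
        _ = ∑ j, (∑ i, A i j * u i) ^ 2 := hy
        _ ≤ ∑ j, (∑ i, A i j ^ 2) * ∑ i, u i ^ 2 := hCS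
        _ = (∑ j : Fin d, ∑ i : Fin d, A i j ^ 2) * ∑ i, u i ^ 2 := by
            rw [Finset.sum_mul]
        _ = H.trace * ∑ p, u p ^ 2 := by rw [hswap, htr]
    exact le_of_mul_le_mul_right this huu
  have hdiv : lamMax / lamMin ≤ H.trace / lamMin := (div_le_div_iff_of_pos_right hlamMinPos).mpr hmaxle
  linarith
end
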